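/- arXiv:1902.08822 — 4 statements merged into one kernel-verified Lean document; each statement's English description precedes it below -/
import Mathlib

section
/- Let 1 ≤ k < N be an integer and let Ω ⊂ ℝ^N be a bounded convex domain such that, for some δ > 0, the k-dimensional ball B_{k,δ} = {x = (x₁,…,x_k,0,…,0) ∈ ℝ^N : |x| < δ} is contained in ∂Ω. Then there exists no real-valued lower semicontinuous function u on closure(Ω) that is a viscosity supersolution of 𝒫ₖ⁺(D²u) = −1 in Ω, vanishes pointwise on ∂Ω, and satisfies lim_{x→0} u(x) = 0. -/
noncomputable section

open Metric Set Filter Bornology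
open scoped RealInnerProductSpace

/-- `ℝ^N` with the Euclidean structure. -/
abbrev Euc (N : ℕ) := EuclideanSpace ℝ (Fin N)

/-- The sum of the `k` largest values (with multiplicity) of `v : Fin N → ℝ`. -/
def sumTopK (N k : ℕ) (v : Fin N → ℝ) : ℝ :=
  sSup {t : ℝ | ∃ s : Finset (Fin N), s.card = k ∧ t = ∑ i ∈ s, v i}

/-- The sum of the `k` smallest values (with multiplicity) of `v : Fin N → ℝ`. -/
def sumBotK (N k : ℕ) (v : Fin N → ℝ) : ℝ :=
  sInf {t : ℝ | ∃ s : Finset (Fin N), s.card = k ∧ t = ∑ i ∈ s, v i}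

/-- `𝒫ₖ⁺(X)`: the sum of the `k` largest eigenvalues of the symmetric matrix `X`. -/
def Pkp (N k : ℕ) (X : Matrix (Fin N) (Fin N) ℝ) : ℝ :=
  if h : X.IsHermitian then sumTopK N k h.eigenvalues else 0

/-- `𝒫ₖ⁻(X)`: the sum of the `k` smallest eigenvalues of the symmetric matrix `X`. -/
def Pkm (N k : ℕ) (X : Matrix (Fin N) (Fin N) ℝ) : ℝ :=
  if h : X.IsHermitian then sumBotK N k h.eigenvalues else 0

/-- The Hessian matrix of `φ : ℝ^N → ℝ` at `x`. -/
def hess {N : ℕ} (φ : Euc N → ℝ) (x : Euc N) : Matrix (Fin N) (Fin N) ℝ :=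
  fun i j => iteratedFDeriv ℝ 2 φ x ![EuclideanSpace.single i 1, EuclideanSpace.single j 1]

/-- `u` is a viscosity supersolution of `G(x, u(x), Du, D²u) = 0` in the open set `Ω`,
where the sign convention is that supersolutions satisfy `G ≤ 0` (degenerate
ellipticity in the second-order slot being monotone increasing). -/
def SuperSol {N : ℕ} (Ω : Set (Euc N))
    (G : Euc N → ℝ → Euc N → Matrix (Fin N) (Fin N) ℝ → ℝ) (u : Euc N → ℝ) : Prop :=
  ∀ x₀ ∈ Ω, ∀ φ : Euc N → ℝ, ContDiffAt ℝ 2 φ x₀ →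
    IsLocalMinOn (fun x => u x - φ x) Ω x₀ →
    G x₀ (u x₀) (gradient φ x₀) (hess φ x₀) ≤ 0

/-- `u` is a viscosity subsolution of `G(x, u(x), Du, D²u) = 0` in the open set `Ω`. -/
def SubSol {N : ℕ} (Ω : Set (Euc N))
    (G : Euc N → ℝ → Euc N → Matrix (Fin N) (Fin N) ℝ → ℝ) (u : Euc N → ℝ) : Prop :=
  ∀ x₀ ∈ Ω, ∀ φ : Euc N → ℝ, ContDiffAt ℝ 2 φ x₀ →
    IsLocalMaxOn (fun x => u x - φ x) Ω x₀ →
    0 ≤ G x₀ (u x₀) (gradient φ x₀) (hess φ x₀)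

/-- A set `s` is strictly convex in the sense of the paper:
`(1-t)x + ty ∈ s` for all distinct `x, y ∈ closure s` and `0 < t < 1`. -/
def StrictlyConvexSet {E : Type*} [NormedAddCommGroup E] [NormedSpace ℝ E] (s : Set E) : Prop :=
  ∀ x ∈ closure s, ∀ y ∈ closure s, x ≠ y → ∀ t : ℝ, 0 < t → t < 1 → (1 - t) • x + t • y ∈ s

/-- `C ⊆ ℝ^N` is a cylinder of class `C_j`: `C = ω × ℝ^{N-j}` with `ω ⊆ ℝ^j` a bounded
strictly convex open set. -/
def IsCylinder (N j : ℕ) (C : Set (Euc N)) : Prop :=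
  ∃ (hj : j ≤ N) (ω : Set (EuclideanSpace ℝ (Fin j))),
    IsOpen ω ∧ IsBounded ω ∧ ω.Nonempty ∧ StrictlyConvexSet ω ∧
    C = {x : Euc N | (WithLp.toLp 2 (fun i : Fin j => x (Fin.castLE hj i)) : EuclideanSpace ℝ (Fin j)) ∈ ω}

/-- `Ω` belongs to the class `𝒞_j`: for every boundary point `x` there are an orthogonal
transformation `O` and a cylinder `C ∈ C_j` with `Ω ⊆ OC` and `x ∈ ∂(OC)`. -/
def MemCclass (N j : ℕ) (Ω : Set (Euc N)) : Prop :=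
  ∀ x ∈ frontier Ω, ∃ (O : Euc N ≃ₗᵢ[ℝ] Euc N) (C : Set (Euc N)),
    IsCylinder N j C ∧ Ω ⊆ (⇑O) '' C ∧ x ∈ frontier ((⇑O) '' C)

/-- `d(Ω)`: the largest dimension of a flat piece of the boundary of `Ω`. -/
def flatDim (N : ℕ) (Ω : Set (Euc N)) : ℕ :=
  sSup {m : ℕ | ∃ x ∈ frontier Ω, ∃ V : Submodule ℝ (Euc N), Module.finrank ℝ V = m ∧
    ∃ δ : ℝ, 0 < δ ∧ (fun v => x + v) '' ((V : Set (Euc N)) ∩ ball 0 δ) ⊆ frontier Ω}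

/-- The generalized principal eigenvalue `μₖ⁺` for `𝒫ₖ⁺(D²·) + b |D·|` on `Ω`. -/
def mukplus (N k : ℕ) (b : ℝ) (Ω : Set (Euc N)) : ℝ :=
  sSup {μ : ℝ | ∃ φ : Euc N → ℝ, LowerSemicontinuousOn φ Ω ∧ (∀ x ∈ Ω, 0 < φ x) ∧
    SuperSol Ω (fun _ r p X => Pkp N k X + b * ‖p‖ + μ * r) φ}

/-- `g` is locally Lipschitz in the open set `Ω`. -/
def LocLipOn {N : ℕ} (Ω : Set (Euc N)) (g : Euc N → ℝ) : Prop :=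
  ∀ x ∈ Ω, ∃ (K : NNReal) (ε : ℝ), 0 < ε ∧ ball x ε ⊆ Ω ∧ LipschitzOnWith K g (ball x ε)

/- ### Auxiliary lemmas -/

/-- A lower semicontinuous function on a nonempty compact set attains its minimum. -/
lemma lsc_exists_min {X : Type*} [TopologicalSpace X] {s : Set X} (hs : IsCompact s)
    (hne : s.Nonempty) {f : X → ℝ} (hf : LowerSemicontinuousOn f s) :
    ∃ x ∈ s, ∀ y ∈ s, f x ≤ f y := by
  by_contra hcon
  push_neg at hcon
  have hchoice : ∀ x : X, x ∈ s → ∃ y, y ∈ s ∧ f y < f x := by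
    intro x hx
    obtain ⟨y, hy, hlt⟩ := hcon x hx
    exact ⟨y, hy, hlt⟩
  choose! y hys hylt using hchoice
  have hU : ∀ x : X, x ∈ s → ∃ U ∈ nhds x, ∀ z ∈ U ∩ s, f (y x) < f z := by
    intro x hx
    have := hf x hx (f (y x)) (hylt x hx)
    rw [eventually_nhdsWithin_iff] at this
    obtain ⟨U, hU1, hU2, hU3⟩ := eventually_nhds_iff.1 this
    exact ⟨U, IsOpen.mem_nhds hU2 hU3, fun z hz => hU1 z hz.1 hz.2⟩
  choose! U hUnhds hUlt using hU
  obtain ⟨t, hcover⟩ := hs.elim_nhds_subcover' (fun x hx => U x) (fun x hx => hUnhds x hx)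
  have htne : t.Nonempty := by
    rcases hne with ⟨x, hx⟩
    rcases mem_iUnion₂.1 (hcover hx) with ⟨i, hi, _⟩
    exact ⟨i, hi⟩
  obtain ⟨x₀, hx₀t, hx₀min⟩ := t.exists_min_image (fun x => f (y x)) htne
  have hyx₀ : (y x₀) ∈ s := hys x₀ x₀.2
  rcases mem_iUnion₂.1 (hcover hyx₀) with ⟨x₁, hx₁t, hmem⟩
  have h1 : f (y x₁) < f (y x₀) := hUlt x₁ x₁.2 (y x₀) ⟨hmem, hyx₀⟩
  have h2 : f (y x₀) ≤ f (y x₁) := hx₀min x₁ hx₁t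
  linarith

/-- The second-derivative bilinear form of the quadratic `x ↦ ∑ w m (x m - c m)²`. -/
def quadB (N : ℕ) (w : Fin N → ℝ) : Euc N →L[ℝ] Euc N →L[ℝ] ℝ :=
  ∑ m : Fin N, (2 * w m) • ((EuclideanSpace.proj m).smulRight (EuclideanSpace.proj m : Euc N →L[ℝ] ℝ))

lemma quadB_apply {N : ℕ} (w : Fin N → ℝ) (v u : Euc N) :
    quadB N w v u = ∑ m : Fin N, 2 * w m * v m * u m := by
  simp [quadB, mul_assoc]

lemma quad_hasFDerivAt {N : ℕ} (w c : Fin N → ℝ) (x : Euc N) :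
    HasFDerivAt (fun x : Euc N => ∑ m : Fin N, w m * (x m - c m)^2)
      (quadB N w x - quadB N w (WithLp.toLp 2 (fun i => c i) : Euc N)) x := by
  have h : ∀ m : Fin N, HasFDerivAt (fun x : Euc N => w m * (x m - c m)^2)
      ((w m * (2 * (x m - c m))) • (EuclideanSpace.proj m : Euc N →L[ℝ] ℝ)) x := by
    intro m
    have h1 : HasFDerivAt (fun x : Euc N => x m - c m)
        (EuclideanSpace.proj m : Euc N →L[ℝ] ℝ) x :=
      (EuclideanSpace.proj m : Euc N →L[ℝ] ℝ).hasFDerivAt.sub_const (c m)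
    have h2 := (h1.mul h1).const_mul (w m)
    have heq : (fun x : Euc N => w m * ((x m - c m) * (x m - c m)))
        = fun x : Euc N => w m * (x m - c m)^2 := by
      funext z; ring
    simp only [Pi.mul_apply] at h2
    rw [heq] at h2
    refine h2.congr_fderiv ?_
    ext u
    simp [PiLp.proj_apply]
    ring
  have hsum := HasFDerivAt.fun_sum (fun m (_ : m ∈ Finset.univ) => h m)
  refine hsum.congr_fderiv ?_
  symm
  ext u
  simp only [ContinuousLinearMap.sub_apply, ContinuousLinearMap.coe_sum', Finset.sum_apply,
    ContinuousLinearMap.coe_smul', Pi.smul_apply, quadB_apply]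
  rw [← Finset.sum_sub_distrib]
  congr 1
  ext m
  simp [PiLp.proj_apply]
  ring

lemma quad_contDiff {N : ℕ} (w c : Fin N → ℝ) :
    ContDiff ℝ 2 (fun x : Euc N => ∑ m : Fin N, w m * (x m - c m)^2) := by
  apply ContDiff.sum
  intro m _
  exact contDiff_const.mul (((PiLp.proj 2 _ m : Euc N →L[ℝ] ℝ).contDiff.sub contDiff_const).pow 2)

lemma hess_quad {N : ℕ} (w c : Fin N → ℝ) (x : Euc N) :
    hess (fun x : Euc N => ∑ m : Fin N, w m * (x m - c m)^2) x
      = Matrix.diagonal (fun i => 2 * w i) := by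
  have hfd : (fderiv ℝ (fun x : Euc N => ∑ m : Fin N, w m * (x m - c m)^2))
      = fun y => quadB N w y - quadB N w (WithLp.toLp 2 (fun i => c i) : Euc N) := by
    funext y
    exact (quad_hasFDerivAt w c y).fderiv
  funext i j
  show iteratedFDeriv ℝ 2 _ x ![_, _] = _
  rw [iteratedFDeriv_two_apply, hfd]
  have h2 : HasFDerivAt (fun y : Euc N => quadB N w y - quadB N w (WithLp.toLp 2 (fun i => c i) : Euc N))
      (quadB N w) x := ((quadB N w).hasFDerivAt).sub_const _
  rw [h2.fderiv]
  show quadB N w (EuclideanSpace.single i 1) (EuclideanSpace.single j 1) = _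
  rw [quadB_apply]
  simp only [EuclideanSpace.single_apply]
  rw [Finset.sum_eq_single i]
  · by_cases h : i = j <;> simp [Matrix.diagonal, h, eq_comm]
  · intro b _ hb; simp [if_neg hb]
  · simp

/-- The sum of the eigenvalues of a real symmetric matrix equals its trace. -/
lemma sum_eigenvalues_eq_trace {N : ℕ} {A : Matrix (Fin N) (Fin N) ℝ} (hA : A.IsHermitian) :
    ∑ i, hA.eigenvalues i = A.trace := by
  rw [hA.trace_eq_sum_eigenvalues]
  simp

lemma card_filter_lt (N k : ℕ) (hk : k ≤ N) :
    (Finset.univ.filter (fun i : Fin N => (i : ℕ) < k)).card = k := by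
  have : Finset.univ.filter (fun i : Fin N => (i : ℕ) < k)
      = Finset.univ.image (Fin.castLE hk) := by
    ext j
    simp only [Finset.mem_filter, Finset.mem_univ, true_and, Finset.mem_image]
    constructor
    · intro hj; exact ⟨⟨(j : ℕ), hj⟩, by ext; simp⟩
    · rintro ⟨i, -, rfl⟩; exact i.2.trans_le (le_refl k)
  rw [this, Finset.card_image_of_injective _ (Fin.castLE_injective hk), Finset.card_univ,
    Fintype.card_fin]

/-- Key lower bound for `Pkp` of a diagonal matrix whose first `k` diagonal entries are `s`
and whose remaining entries are `t ≤ s`. -/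
lemma pkp_diag_ge {N k : ℕ} (hk : k ≤ N) (s t : ℝ) (hts : t ≤ s) :
    (k : ℝ) * s ≤ Pkp N k (Matrix.diagonal (fun i : Fin N => if (i : ℕ) < k then s else t)) := by
  set d : Fin N → ℝ := fun i => if (i : ℕ) < k then s else t with hd
  have hA : (Matrix.diagonal d).IsHermitian := Matrix.isHermitian_diagonal d
  set μ : Fin N → ℝ := hA.eigenvalues with hμ
  have h1 : ∀ i, μ i = s ∨ μ i = t := by
    intro i
    have hv := hA.mulVec_eigenvectorBasis i
    have hvne : (⇑(hA.eigenvectorBasis i) : Fin N → ℝ) ≠ 0 := by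
      intro h0
      exact hA.eigenvectorBasis.orthonormal.ne_zero i (by ext j; exact congrFun h0 j)
    obtain ⟨j, hj⟩ := Function.ne_iff.1 hvne
    have hcoord := congrFun hv j
    rw [Matrix.mulVec_diagonal] at hcoord
    have : d j = μ i := by
      have : d j * hA.eigenvectorBasis i j = μ i * hA.eigenvectorBasis i j := hcoord
      exact mul_right_cancel₀ hj this
    rw [← this, hd]
    by_cases hjk : (j : ℕ) < k
    · left; simp [hjk]
    · right; simp [hjk]
  have h2 : ∃ S : Finset (Fin N), S.card = k ∧ ∀ i ∈ S, μ i = s := by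
    by_cases hst : s = t
    · refine ⟨Finset.univ.filter (fun i : Fin N => (i : ℕ) < k), card_filter_lt N k hk, ?_⟩
      intro i _
      rcases h1 i with h | h
      · exact h
      · rw [h, hst]
    · have hcard1 : (Finset.univ.filter (fun i : Fin N => (i : ℕ) < k)).card = k :=
        card_filter_lt N k hk
      have hcard2 : (Finset.univ.filter (fun i : Fin N => ¬ (i : ℕ) < k)).card = N - k := by
        have := Finset.card_filter_add_card_filter_not (s := (Finset.univ : Finset (Fin N)))
          (p := fun i : Fin N => (i : ℕ) < k)
        simp only [Finset.card_univ, Fintype.card_fin] at this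
        omega
      have htr : ∑ i, μ i = (k : ℝ) * s + ((N : ℝ) - k) * t := by
        rw [hμ, sum_eigenvalues_eq_trace hA, Matrix.trace_diagonal]
        rw [hd, Finset.sum_ite, Finset.sum_const, Finset.sum_const, hcard1, hcard2,
          nsmul_eq_mul, nsmul_eq_mul, Nat.cast_sub hk]
      set m := (Finset.univ.filter (fun i : Fin N => μ i = s)).card with hm
      have hmN : m ≤ N := by
        rw [hm]
        exact (Finset.card_filter_le _ _).trans (by simp)
      have hsum2 : ∑ i, μ i = (m : ℝ) * s + ((N : ℝ) - m) * t := by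
        rw [← Finset.sum_filter_add_sum_filter_not Finset.univ (fun i => μ i = s) μ]
        have e1 : ∑ i ∈ Finset.univ.filter (fun i => μ i = s), μ i = (m : ℝ) * s := by
          rw [Finset.sum_congr rfl (fun i hi => (Finset.mem_filter.1 hi).2), Finset.sum_const,
            ← hm, nsmul_eq_mul]
        have e2 : ∑ i ∈ Finset.univ.filter (fun i => ¬ μ i = s), μ i = ((N : ℝ) - m) * t := by
          rw [Finset.sum_congr rfl (fun i hi => ?_), Finset.sum_const, nsmul_eq_mul]
          · congr 1
            have := Finset.card_filter_add_card_filter_not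
              (s := (Finset.univ : Finset (Fin N))) (p := fun i : Fin N => μ i = s)
            have hcc : (Finset.univ.filter (fun i : Fin N => ¬ μ i = s)).card = N - m := by
              simp only [Finset.card_univ, Fintype.card_fin] at this
              omega
            rw [hcc, Nat.cast_sub hmN]
          · have := (Finset.mem_filter.1 hi).2
            rcases h1 i with h | h
            · exact absurd h this
            · exact h
        rw [e1, e2]
      have hmk : (m : ℝ) = (k : ℝ) := by
        have hfac : ((m : ℝ) - k) * (s - t) = 0 := by
          rw [htr] at hsum2
          ring_nf
          ring_nf at hsum2
          linarith
        rcases mul_eq_zero.1 hfac with h | h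
        · linarith
        · exact absurd (by linarith : s = t) hst
      have hmk' : m = k := Nat.cast_injective hmk
      refine ⟨Finset.univ.filter (fun i : Fin N => μ i = s), hmk', ?_⟩
      intro i hi
      exact (Finset.mem_filter.1 hi).2
  obtain ⟨S, hScard, hSval⟩ := h2
  have hmem : (k : ℝ) * s ∈ {t : ℝ | ∃ s' : Finset (Fin N), s'.card = k ∧ t = ∑ i ∈ s', μ i} := by
    refine ⟨S, hScard, ?_⟩
    rw [Finset.sum_congr rfl hSval, Finset.sum_const, hScard, nsmul_eq_mul]
  have hbdd : BddAbove {t : ℝ | ∃ s' : Finset (Fin N), s'.card = k ∧ t = ∑ i ∈ s', μ i} := by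
    apply Set.Finite.bddAbove
    apply Set.Finite.subset (Set.finite_range (fun S : Finset (Fin N) => ∑ i ∈ S, μ i))
    rintro x ⟨S, -, rfl⟩
    exact ⟨S, rfl⟩
  calc (k : ℝ) * s ≤ sSup {t : ℝ | ∃ s' : Finset (Fin N), s'.card = k ∧ t = ∑ i ∈ s', μ i} :=
        le_csSup hbdd hmem
    _ = Pkp N k (Matrix.diagonal d) := by rw [Pkp, dif_pos hA]; rfl

/-- Euclidean norm bound from a bound on the sum of squared coordinates. -/
lemma norm_le_of_sq_sum {N : ℕ} (z : Euc N) (b : ℝ) (hb : 0 ≤ b)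
    (h : ∑ i, (z i)^2 ≤ b^2) : ‖z‖ ≤ b := by
  rw [EuclideanSpace.norm_eq]
  have h' : ∑ i, ‖z i‖^2 ≤ b^2 := by
    simpa [Real.norm_eq_abs, sq_abs] using h
  calc Real.sqrt (∑ i, ‖z i‖^2) ≤ Real.sqrt (b^2) := Real.sqrt_le_sqrt h'
    _ = b := by rw [Real.sqrt_sq hb]


set_option maxHeartbeats 1000000

/-- **Proposition (`non existence`).** If a bounded convex domain `Ω ⊆ ℝ^N` has a flat
`k`-dimensional ball `B_{k,δ}` in its boundary, then there is no lower semicontinuous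
viscosity supersolution of `𝒫ₖ⁺(D²u) = -1` in `Ω` vanishing on `∂Ω` with `lim_{x→0} u(x) = 0`. -/
theorem no_supersolution_of_flat_boundary_ball {N k : ℕ} (hk1 : 1 ≤ k) (hkN : k < N)
    (δ : ℝ) (hδ : 0 < δ)
    (Ω : Set (Euc N)) (hΩo : IsOpen Ω) (hΩb : IsBounded Ω) (hΩne : Ω.Nonempty)
    (hΩc : Convex ℝ Ω)
    (hflat : {x : Euc N | (∀ i : Fin N, k ≤ (i : ℕ) → x i = 0) ∧ ‖x‖ < δ} ⊆ frontier Ω) :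
    ¬ ∃ u : Euc N → ℝ,
        LowerSemicontinuousOn u (closure Ω) ∧
        SuperSol Ω (fun _ _ _ X => Pkp N k X + 1) u ∧
        (∀ x ∈ frontier Ω, u x = 0) ∧
        Filter.Tendsto u (nhdsWithin 0 Ω) (nhds 0) := by
  rintro ⟨u, hlsc, hsuper, hbdry, hlim⟩
  have hkN' : k ≤ N := hkN.le
  have hk1R : (1 : ℝ) ≤ (k : ℝ) := by exact_mod_cast hk1
  set lam : ℝ := 1 / (4 * (k : ℝ)) with hlam
  have hlampos : 0 < lam := by rw [hlam]; positivity
  have hlamle : lam ≤ 1 := by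
    rw [hlam]
    rw [div_le_one (by linarith)]
    linarith
  -- 0 is a boundary point of Ω
  have h0f : (0 : Euc N) ∈ frontier Ω := hflat ⟨fun i _ => rfl, by simpa using hδ⟩
  -- Pkp of the Hessian of the zero function is nonnegative
  have hPkp0 : ∀ x : Euc N, (0 : ℝ) ≤ Pkp N k (hess (fun _ : Euc N => (0 : ℝ)) x) := by
    intro x
    have h1 : (fun _ : Euc N => (0 : ℝ))
        = fun x : Euc N => ∑ m : Fin N, (0 : ℝ) * (x m - (0 : Fin N → ℝ) m)^2 := by
      funext y; simp
    have h2 : hess (fun _ : Euc N => (0 : ℝ)) x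
        = Matrix.diagonal (fun _ : Fin N => 2 * (0 : ℝ)) := by
      rw [h1]; exact hess_quad (fun _ => 0) (fun _ => 0) x
    have h3 := pkp_diag_ge (N := N) (k := k) hkN' 0 0 le_rfl
    have h4 : (fun _ : Fin N => 2 * (0 : ℝ))
        = fun i : Fin N => if (i : ℕ) < k then (0 : ℝ) else 0 := by
      funext i; simp
    rw [h2, h4]
    simpa using h3
  -- u is nonnegative on closure Ω
  have hccpt : IsCompact (closure Ω) := hΩb.isCompact_closure
  obtain ⟨y₀, hy₀⟩ := hΩne
  have hcne : (closure Ω).Nonempty := ⟨y₀, subset_closure hy₀⟩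
  obtain ⟨x₀, hx₀c, hx₀min⟩ := lsc_exists_min hccpt hcne hlsc
  have hu0 : ∀ x ∈ closure Ω, 0 ≤ u x := by
    have hx₀f : x₀ ∈ frontier Ω := by
      by_contra hx₀f
      have hx₀Ω : x₀ ∈ Ω := by
        rcases (closure_eq_interior_union_frontier Ω ▸ hx₀c) with h | h
        · rwa [hΩo.interior_eq] at h
        · exact absurd h hx₀f
      have hloc : IsLocalMinOn (fun x => u x - (fun _ : Euc N => (0 : ℝ)) x) Ω x₀ :=
        eventually_nhdsWithin_of_forall (fun x hx => by
          simpa using hx₀min x (subset_closure hx))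
      have hs := hsuper x₀ hx₀Ω (fun _ => 0) contDiffAt_const hloc
      have hp := hPkp0 x₀
      simp only at hs
      linarith
    intro x hx
    have := hx₀min x hx
    rwa [hbdry x₀ hx₀f] at this
  -- a ball inside Ω
  obtain ⟨dd, hddpos, hball⟩ := Metric.isOpen_iff.1 hΩo y₀ hy₀
  -- the key quantitative lower bound along the segment towards y₀
  have key : ∀ τ : ℝ, 0 < τ → τ ≤ 1/2 → lam * ((1 - τ) * δ / 2)^2 ≤ u (τ • y₀) := by
    intro τ hτ0 hτ2
    have hτ1 : (0 : ℝ) < 1 - τ := by linarith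
    set c : Euc N := τ • y₀ with hc
    set r : ℝ := (1 - τ) * δ / 2 with hr
    set ρ : ℝ := τ * dd / 2 with hρ
    have hrpos : 0 < r := by rw [hr]; positivity
    have hρpos : 0 < ρ := by rw [hρ]; positivity
    set Fk : Finset (Fin N) := Finset.univ.filter (fun i : Fin N => (i : ℕ) < k) with hFk
    set Q1 : Euc N → ℝ := fun x => ∑ i ∈ Fk, (x i - c i)^2 with hQ1
    set Q2 : Euc N → ℝ := fun x => ∑ i ∈ Finset.univ.filter (fun i : Fin N => ¬ (i : ℕ) < k),
      (x i - c i)^2 with hQ2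
    have hQ1c : Continuous Q1 := by
      apply continuous_finset_sum
      intro i _
      exact (((PiLp.proj 2 (fun _ : Fin N => ℝ) i : Euc N →L[ℝ] ℝ).continuous).sub continuous_const).pow 2
    have hQ2c : Continuous Q2 := by
      apply continuous_finset_sum
      intro i _
      exact (((PiLp.proj 2 (fun _ : Fin N => ℝ) i : Euc N →L[ℝ] ℝ).continuous).sub continuous_const).pow 2
    set S : Set (Euc N) := {x | Q1 x ≤ r^2 ∧ Q2 x ≤ ρ^2} with hS
    have hcS : c ∈ S := by
      have h1 : Q1 c = 0 := by rw [hQ1]; simp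
      have h2 : Q2 c = 0 := by rw [hQ2]; simp
      exact ⟨by rw [h1]; positivity, by rw [h2]; positivity⟩
    -- the slab S is contained in Ω
    have hSsub : S ⊆ Ω := by
      rintro x ⟨hx1, hx2⟩
      set z : Euc N := WithLp.toLp 2 (fun i : Fin N => if (i : ℕ) < k then (x i - c i)/(1 - τ) else 0) with hz
      set y' : Euc N := WithLp.toLp 2 (fun i : Fin N => if (i : ℕ) < k then y₀ i else y₀ i + (x i - c i)/τ)
        with hy'
      have hzi : ∀ i : Fin N, z i = if (i : ℕ) < k then (x i - c i)/(1 - τ) else 0 :=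
        fun i => rfl
      have hy'i : ∀ i : Fin N, y' i = if (i : ℕ) < k then y₀ i else y₀ i + (x i - c i)/τ :=
        fun i => rfl
      have hci : ∀ i : Fin N, c i = τ * y₀ i := fun i => rfl
      have hzfr : z ∈ frontier Ω := by
        apply hflat
        constructor
        · intro i hi
          rw [hzi i]
          simp [Nat.not_lt.mpr hi]
        · have hsum : ∑ i, (z i)^2 ≤ (δ/2)^2 := by
            have e0 : ∀ i : Fin N,
                (z i)^2 = if (i : ℕ) < k then ((x i - c i)/(1 - τ))^2 else 0 := by
              intro i; rw [hzi i]; split_ifs <;> simp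
            have e1 : ∑ i, (z i)^2 = ∑ i ∈ Fk, ((x i - c i)/(1 - τ))^2 := by
              rw [Finset.sum_congr rfl (fun i _ => e0 i), ← Finset.sum_filter, hFk]
            have e2 : ∑ i ∈ Fk, ((x i - c i)/(1 - τ))^2 = (1/(1 - τ))^2 * Q1 x := by
              rw [hQ1, Finset.mul_sum]
              refine Finset.sum_congr rfl fun i _ => ?_
              field_simp
            rw [e1, e2]
            have : (1/(1 - τ))^2 * Q1 x ≤ (1/(1 - τ))^2 * r^2 := by
              have : (0:ℝ) ≤ (1/(1 - τ))^2 := sq_nonneg _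
              nlinarith [hx1]
            calc (1/(1 - τ))^2 * Q1 x ≤ (1/(1 - τ))^2 * r^2 := this
              _ = (δ/2)^2 := by rw [hr]; field_simp
          have := norm_le_of_sq_sum z (δ/2) (by positivity) hsum
          linarith
      have hy'b : y' ∈ ball y₀ dd := by
        rw [mem_ball, dist_eq_norm]
        have hsum : ∑ i, ((y' - y₀) i)^2 ≤ (dd/2)^2 := by
          have e0 : ∀ i : Fin N,
              ((y' - y₀) i)^2 = if ¬ (i : ℕ) < k then ((x i - c i)/τ)^2 else 0 := by
            intro i
            have h2 : (y' - y₀) i = y' i - y₀ i := rfl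
            rw [h2, hy'i i]
            split_ifs <;> simp
          have e1 : ∑ i, ((y' - y₀) i)^2
              = ∑ i ∈ Finset.univ.filter (fun i : Fin N => ¬ (i : ℕ) < k), ((x i - c i)/τ)^2 := by
            rw [Finset.sum_congr rfl (fun i _ => e0 i), ← Finset.sum_filter]
          have e2 : ∑ i ∈ Finset.univ.filter (fun i : Fin N => ¬ (i : ℕ) < k),
              ((x i - c i)/τ)^2 = (1/τ)^2 * Q2 x := by
            rw [hQ2, Finset.mul_sum]
            refine Finset.sum_congr rfl fun i _ => ?_
            field_simp
          rw [e1, e2]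
          calc (1/τ)^2 * Q2 x ≤ (1/τ)^2 * ρ^2 := by nlinarith [sq_nonneg (1/τ), hx2]
            _ = (dd/2)^2 := by rw [hρ]; field_simp
        have := norm_le_of_sq_sum (y' - y₀) (dd/2) (by positivity) hsum
        linarith
      have hcombo : (1 - τ) • z + τ • y' = x := by
        ext i
        have h1 : ((1 - τ) • z + τ • y') i = (1 - τ) * z i + τ * y' i := rfl
        rw [h1, hzi i, hy'i i]
        have hτne : (1 : ℝ) - τ ≠ 0 := ne_of_gt hτ1
        have hτne' : τ ≠ 0 := ne_of_gt hτ0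
        by_cases hik : (i : ℕ) < k
        · simp only [hik, if_true]
          have hstep : (1 - τ) * ((x i - c i)/(1 - τ)) = x i - c i := by field_simp
          rw [hstep, hci i]
          ring
        · simp only [hik, if_false]
          have hstep : τ * (y₀ i + (x i - c i)/τ) = τ * y₀ i + (x i - c i) := by
            field_simp
          rw [hstep, hci i]
          ring
      have hmem := hΩc.combo_closure_interior_mem_interior
        (frontier_subset_closure hzfr)
        (by rw [hΩo.interior_eq]; exact hball hy'b)
        (le_of_lt hτ1) hτ0 (by ring)
      rw [hΩo.interior_eq, hcombo] at hmem
      exact hmem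
    -- S is compact
    have hSclosed : IsClosed S := by
      have : S = {x | Q1 x ≤ r^2} ∩ {x | Q2 x ≤ ρ^2} := rfl
      rw [this]
      exact (isClosed_le hQ1c continuous_const).inter (isClosed_le hQ2c continuous_const)
    have hSsubball : S ⊆ Metric.closedBall c (r + ρ) := by
      rintro x ⟨hx1, hx2⟩
      rw [Metric.mem_closedBall, dist_eq_norm]
      apply norm_le_of_sq_sum (x - c) (r + ρ) (by positivity)
      have e0 : ∀ i : Fin N, ((x - c) i)^2 = (x i - c i)^2 := fun i => rfl
      have e1 : ∑ i, ((x - c) i)^2 = Q1 x + Q2 x := by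
        rw [Finset.sum_congr rfl (fun i _ => e0 i),
          ← Finset.sum_filter_add_sum_filter_not Finset.univ (fun i : Fin N => (i : ℕ) < k)]
      rw [e1]
      nlinarith [hrpos, hρpos]
    have hScpt : IsCompact S :=
      (isCompact_closedBall c (r + ρ)).of_isClosed_subset hSclosed hSsubball
    -- the parameter ε and the test function φ
    have hcΩ : c ∈ Ω := hSsub hcS
    have hucnn : 0 ≤ u c := hu0 c (subset_closure hcΩ)
    set ε : ℝ := min 1 (ρ^2/(u c + 1)) with hε
    have hεpos : 0 < ε := lt_min one_pos (by positivity)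
    have hε1 : ε ≤ 1 := min_le_left _ _
    have hεub : ε ≤ ρ^2/(u c + 1) := min_le_right _ _
    have hinvε : (1 : ℝ) ≤ 1/ε := by
      rw [le_div_iff₀ hεpos]; linarith
    set w : Fin N → ℝ := fun i => if (i : ℕ) < k then -lam else -(1/ε) with hw
    set φ : Euc N → ℝ := fun x => ∑ m : Fin N, w m * (x m - c m)^2 with hφ
    have hφc : φ c = 0 := by
      rw [hφ]
      simp
    have hφsplit : ∀ x : Euc N, φ x = -lam * Q1 x - (1/ε) * Q2 x := by
      intro x
      have hφx : φ x = ∑ m : Fin N, w m * (x m - c m)^2 := rfl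
      rw [hφx, ← Finset.sum_filter_add_sum_filter_not Finset.univ (fun i : Fin N => (i : ℕ) < k)
        (fun m => w m * (x m - c m)^2)]
      have e1 : ∑ m ∈ Finset.univ.filter (fun i : Fin N => (i : ℕ) < k), w m * (x m - c m)^2
          = -lam * Q1 x := by
        rw [hQ1, hFk, Finset.mul_sum]
        refine Finset.sum_congr rfl fun i hi => ?_
        have hmem := (Finset.mem_filter.1 hi).2
        simp only [hw, hmem, if_true]
      have e2 : ∑ m ∈ Finset.univ.filter (fun i : Fin N => ¬ (i : ℕ) < k), w m * (x m - c m)^2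
          = -(1/ε) * Q2 x := by
        rw [hQ2, Finset.mul_sum]
        refine Finset.sum_congr rfl fun i hi => ?_
        have hmem := (Finset.mem_filter.1 hi).2
        simp only [hw, hmem, if_false]
      rw [e1, e2]
      ring
    -- minimize u - φ over S
    have hlscf : LowerSemicontinuousOn (fun x => u x - φ x) S := by
      have h1 : LowerSemicontinuousOn u S :=
        hlsc.mono (fun x hx => subset_closure (hSsub hx))
      have h2 : LowerSemicontinuousOn (fun x => -φ x) S :=
        (((quad_contDiff w (fun m => c m)).continuous.neg).lowerSemicontinuous).lowerSemicontinuousOn _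
      have := h1.add h2
      simpa [sub_eq_add_neg] using this
    obtain ⟨p, hpS, hpmin⟩ := lsc_exists_min hScpt ⟨c, hcS⟩ hlscf
    have hple : u p - φ p ≤ u c := by
      have := hpmin c hcS
      rwa [hφc, sub_zero] at this
    have hupnn : 0 ≤ u p := hu0 p (subset_closure (hSsub hpS))
    have hQ1nn : 0 ≤ Q1 p := by rw [hQ1]; exact Finset.sum_nonneg (fun i _ => sq_nonneg _)
    have hQ2nn : 0 ≤ Q2 p := by rw [hQ2]; exact Finset.sum_nonneg (fun i _ => sq_nonneg _)
    by_cases hint : Q1 p < r^2 ∧ Q2 p < ρ^2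
    · -- interior minimum: contradiction with the equation
      exfalso
      have hpΩ : p ∈ Ω := hSsub hpS
      have hUopen : IsOpen {x : Euc N | Q1 x < r^2 ∧ Q2 x < ρ^2} := by
        have : {x : Euc N | Q1 x < r^2 ∧ Q2 x < ρ^2}
            = {x | Q1 x < r^2} ∩ {x | Q2 x < ρ^2} := rfl
        rw [this]
        exact (isOpen_lt hQ1c continuous_const).inter (isOpen_lt hQ2c continuous_const)
      have hUnhds : {x : Euc N | Q1 x < r^2 ∧ Q2 x < ρ^2} ∈ nhds p :=
        hUopen.mem_nhds hint
      have hloc : IsLocalMinOn (fun x => u x - φ x) Ω p := by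
        apply Filter.eventually_of_mem (mem_nhdsWithin_of_mem_nhds hUnhds)
        intro x hx
        exact hpmin x ⟨le_of_lt hx.1, le_of_lt hx.2⟩
      have hsup := hsuper p hpΩ φ ((quad_contDiff w (fun m => c m)).contDiffAt) hloc
      simp only at hsup
      have hhess : hess φ p
          = Matrix.diagonal (fun i : Fin N => if (i : ℕ) < k then -(2*lam) else -(2*(1/ε))) := by
        rw [hφ]
        rw [hess_quad w (fun m => c m) p]
        congr 1
        funext i
        by_cases hik : (i : ℕ) < k <;> simp [hw, hik] <;> ring
      have hts : -(2*(1/ε)) ≤ -(2*lam) := by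
        have : lam ≤ 1/ε := le_trans hlamle hinvε
        linarith
      have hpkp := pkp_diag_ge (N := N) (k := k) hkN' (-(2*lam)) (-(2*(1/ε))) hts
      rw [hhess] at hsup
      have hkne : (k : ℝ) ≠ 0 := by linarith
      have hval : (k : ℝ) * -(2*lam) = -(1/2) := by
        rw [hlam]
        field_simp
        ring
      rw [hval] at hpkp
      linarith
    · rcases not_and_or.1 hint with h | h
      · -- the minimum is on the lateral face: the desired bound
        have h' : r^2 ≤ Q1 p := le_of_not_gt h
        have hfp : lam * r^2 ≤ u p - φ p := by
          rw [hφsplit p]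
          have h1 : (0:ℝ) < 1/ε := by positivity
          nlinarith
        linarith
      · -- the minimum is on the top/bottom face: impossible by the choice of ε
        exfalso
        have h' : ρ^2 ≤ Q2 p := le_of_not_gt h
        have hucb : ε * (u c + 1) ≤ ρ^2 := by
          rw [le_div_iff₀ (by positivity : (0:ℝ) < u c + 1)] at hεub
          exact hεub
        have hfp : (1/ε) * ρ^2 ≤ u p - φ p := by
          rw [hφsplit p]
          have h1 : (0:ℝ) < 1/ε := by positivity
          nlinarith
        have h2 : u c + 1 ≤ (1/ε) * ρ^2 := by
          have hstep := mul_le_mul_of_nonneg_left hucb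
            (le_of_lt (by positivity : (0:ℝ) < 1/ε))
          calc u c + 1 = (1/ε) * (ε * (u c + 1)) := by field_simp
            _ ≤ (1/ε) * ρ^2 := hstep
        linarith
  -- conclude via the limit hypothesis at 0
  have hmemΩ : ∀ τ : ℝ, 0 < τ → τ < 1 → τ • y₀ ∈ Ω := by
    intro τ h0 h1
    have hmem := hΩc.combo_closure_interior_mem_interior
      (frontier_subset_closure h0f)
      (by rw [hΩo.interior_eq]; exact hy₀)
      (by linarith : (0:ℝ) ≤ 1 - τ) h0 (by ring)
    rw [hΩo.interior_eq] at hmem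
    simpa using hmem
  have htends : Filter.Tendsto (fun τ : ℝ => u (τ • y₀)) (nhdsWithin 0 (Set.Ioo 0 (1/2)))
      (nhds 0) := by
    apply hlim.comp
    rw [tendsto_nhdsWithin_iff]
    constructor
    · have hcont : Continuous (fun τ : ℝ => τ • y₀) := continuous_id.smul continuous_const
      have := hcont.tendsto 0
      simp only [zero_smul] at this
      exact this.mono_left nhdsWithin_le_nhds
    · exact eventually_nhdsWithin_of_forall
        (fun τ hτ => hmemΩ τ hτ.1 (by linarith [hτ.2]))
  have hev : ∀ᶠ τ in nhdsWithin (0:ℝ) (Set.Ioo 0 (1/2)), lam * (δ/4)^2 ≤ u (τ • y₀) := by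
    apply eventually_nhdsWithin_of_forall
    intro τ hτ
    have hk := key τ hτ.1 (le_of_lt hτ.2)
    have h4 : δ/4 ≤ (1 - τ) * δ / 2 := by nlinarith [hτ.2, hδ]
    have h5 : (δ/4)^2 ≤ ((1 - τ) * δ / 2)^2 := by nlinarith [hδ]
    nlinarith
  have hNeBot : (nhdsWithin (0:ℝ) (Set.Ioo 0 (1/2))).NeBot := by
    apply IsGLB.nhdsWithin_neBot
    · exact isGLB_Ioo (by norm_num)
    · exact Set.nonempty_Ioo.2 (by norm_num)
  have hfinal := ge_of_tendsto htends hev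
  have : 0 < lam * (δ/4)^2 := by positivity
  linarith
end
end

section
/- Let ω ⊂ ℝ^j be a bounded strictly convex domain and let ψ be the infimum over the family ℱ of concave quadratics positive on ω. Then ψ(x) = 0 for all x ∈ ∂ω; in particular, ψ is continuous on closure(ω). -/
noncomputable section

open Metric Set Filter Bornology
open scoped RealInnerProductSpace

/-- The function `ψ`: the infimum over the family `ℱ` of concave quadratics
`f(x) = (R² - |x - x₀|²)/2` which are positive on `ω`. -/
def psiF {j : ℕ} (ω : Set (EuclideanSpace ℝ (Fin j))) (x : EuclideanSpace ℝ (Fin j)) : ℝ :=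
  sInf {t : ℝ | ∃ (R : ℝ) (x₀ : EuclideanSpace ℝ (Fin j)), 0 < R ∧
    (∀ y ∈ ω, 0 < (R ^ 2 - ‖y - x₀‖ ^ 2) / 2) ∧ t = (R ^ 2 - ‖x - x₀‖ ^ 2) / 2}

section PsiAux

variable {j : ℕ}

local notation "E" => EuclideanSpace ℝ (Fin j)

def psiSet (ω : Set (EuclideanSpace ℝ (Fin j))) (x : EuclideanSpace ℝ (Fin j)) : Set ℝ :=
  {t : ℝ | ∃ (R : ℝ) (x₀ : EuclideanSpace ℝ (Fin j)), 0 < R ∧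
    (∀ y ∈ ω, 0 < (R ^ 2 - ‖y - x₀‖ ^ 2) / 2) ∧ t = (R ^ 2 - ‖x - x₀‖ ^ 2) / 2}

lemma psiF_eq (ω : Set (EuclideanSpace ℝ (Fin j))) (x : EuclideanSpace ℝ (Fin j)) :
    psiF ω x = sInf (psiSet ω x) := rfl

lemma psiSet_nonempty (ω : Set (EuclideanSpace ℝ (Fin j))) (hωb : IsBounded ω)
    (x : EuclideanSpace ℝ (Fin j)) : (psiSet ω x).Nonempty := by
  obtain ⟨r, hr⟩ := hωb.subset_closedBall 0
  refine ⟨(((max r 0) + 1) ^ 2 - ‖x - 0‖ ^ 2) / 2, (max r 0) + 1, 0, by positivity, ?_, rfl⟩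
  intro y hy
  have h1 : ‖y - 0‖ ≤ max r 0 := by
    rw [sub_zero]
    have h := hr hy
    rw [Metric.mem_closedBall, dist_zero_right] at h
    exact h.trans (le_max_left _ _)
  have h2 : ‖y - 0‖ ^ 2 ≤ (max r 0) ^ 2 := by
    have := norm_nonneg (y - (0 : EuclideanSpace ℝ (Fin j)))
    nlinarith
  nlinarith [le_max_right r 0]

lemma psiSet_mem_nonneg {ω : Set (EuclideanSpace ℝ (Fin j))} {x : EuclideanSpace ℝ (Fin j)}
    (hx : x ∈ closure ω) {t : ℝ} (ht : t ∈ psiSet ω x) : 0 ≤ t := by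
  obtain ⟨R, x₀, hR, hpos, rfl⟩ := ht
  have hcl : IsClosed {y : EuclideanSpace ℝ (Fin j) | 0 ≤ (R ^ 2 - ‖y - x₀‖ ^ 2) / 2} := by
    have hcont : Continuous fun y : EuclideanSpace ℝ (Fin j) => (R ^ 2 - ‖y - x₀‖ ^ 2) / 2 := by
      fun_prop
    exact isClosed_le continuous_const hcont
  have hsub : closure ω ⊆ {y : EuclideanSpace ℝ (Fin j) | 0 ≤ (R ^ 2 - ‖y - x₀‖ ^ 2) / 2} :=
    closure_minimal (fun y hy => (hpos y hy).le) hcl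
  exact hsub hx

lemma psiF_nonneg {ω : Set (EuclideanSpace ℝ (Fin j))} (hωb : IsBounded ω)
    {x : EuclideanSpace ℝ (Fin j)} (hx : x ∈ closure ω) : 0 ≤ psiF ω x :=
  le_csInf (psiSet_nonempty ω hωb x) fun _ ht => psiSet_mem_nonneg hx ht

lemma psiF_le {ω : Set (EuclideanSpace ℝ (Fin j))} {x : EuclideanSpace ℝ (Fin j)}
    (hx : x ∈ closure ω) {t : ℝ} (ht : t ∈ psiSet ω x) : psiF ω x ≤ t :=
  csInf_le ⟨0, fun _ hs => psiSet_mem_nonneg hx hs⟩ ht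

lemma normsq_combo_le {u v : EuclideanSpace ℝ (Fin j)} {a b : ℝ} (ha : 0 ≤ a) (hb : 0 ≤ b)
    (hab : a + b = 1) : ‖a • u + b • v‖ ^ 2 ≤ a * ‖u‖ ^ 2 + b * ‖v‖ ^ 2 := by
  have e : ‖a • u + b • v‖ ^ 2
      = a ^ 2 * ‖u‖ ^ 2 + 2 * (a * b) * ⟪u, v⟫ + b ^ 2 * ‖v‖ ^ 2 := by
    rw [← real_inner_self_eq_norm_sq, ← real_inner_self_eq_norm_sq, ← real_inner_self_eq_norm_sq,
      real_inner_add_add_self, real_inner_smul_left, real_inner_smul_left, real_inner_smul_left,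
      real_inner_smul_right, real_inner_smul_right, real_inner_smul_right]
    ring
  nlinarith [real_inner_le_norm u v, sq_nonneg (‖u‖ - ‖v‖), mul_nonneg ha hb,
    norm_nonneg u, norm_nonneg v]

end PsiAux

section PsiMain

variable {j : ℕ}

lemma convex_of_strictlyConvexSet {ω : Set (EuclideanSpace ℝ (Fin j))}
    (hωsc : StrictlyConvexSet ω) : Convex ℝ ω := by
  intro x hx y hy a b ha hb hab
  rcases eq_or_ne x y with rfl | hxy
  · have : a • x + b • x = x := by rw [← add_smul, hab, one_smul]
    rwa [this]
  rcases ha.eq_or_lt with rfl | ha'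
  · have hb1 : b = 1 := by linarith
    simp only [zero_smul, zero_add, hb1, one_smul]; exact hy
  rcases hb.eq_or_lt with rfl | hb'
  · have ha1 : a = 1 := by linarith
    simp only [zero_smul, add_zero, ha1, one_smul]; exact hx
  have h := hωsc x (subset_closure hx) y (subset_closure hy) hxy b hb' (by linarith)
  rwa [show (1 : ℝ) - b = a by linarith] at h

set_option maxHeartbeats 1000000 in
lemma psiF_concaveOn {ω : Set (EuclideanSpace ℝ (Fin j))} (hωb : IsBounded ω)
    (hωsc : StrictlyConvexSet ω) : ConcaveOn ℝ (closure ω) (psiF ω) := by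
  have hcl : Convex ℝ (closure ω) := (convex_of_strictlyConvexSet hωsc).closure
  refine ⟨hcl, ?_⟩
  intro x hx y hy a b ha hb hab
  refine le_csInf (psiSet_nonempty ω hωb _) ?_
  rintro t ⟨R, x₀, hR, hpos, rfl⟩
  simp only [smul_eq_mul]
  have h1 : psiF ω x ≤ (R ^ 2 - ‖x - x₀‖ ^ 2) / 2 := psiF_le hx ⟨R, x₀, hR, hpos, rfl⟩
  have h2 : psiF ω y ≤ (R ^ 2 - ‖y - x₀‖ ^ 2) / 2 := psiF_le hy ⟨R, x₀, hR, hpos, rfl⟩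
  have hdecomp : a • x + b • y - x₀ = a • (x - x₀) + b • (y - x₀) := by
    calc a • x + b • y - x₀ = a • (x - x₀) + b • (y - x₀) + ((a + b) - 1) • x₀ := by module
      _ = a • (x - x₀) + b • (y - x₀) := by rw [hab]; simp
  have key : ‖a • x + b • y - x₀‖ ^ 2 ≤ a * ‖x - x₀‖ ^ 2 + b * ‖y - x₀‖ ^ 2 := by
    rw [hdecomp]; exact normsq_combo_le ha hb hab
  have hRR : a * R ^ 2 + b * R ^ 2 = R ^ 2 := by rw [← add_mul, hab, one_mul]
  have e1 : a * psiF ω x ≤ a * ((R ^ 2 - ‖x - x₀‖ ^ 2) / 2) := mul_le_mul_of_nonneg_left h1 ha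
  have e2 : b * psiF ω y ≤ b * ((R ^ 2 - ‖y - x₀‖ ^ 2) / 2) := mul_le_mul_of_nonneg_left h2 hb
  have e3 : a * ((R ^ 2 - ‖x - x₀‖ ^ 2) / 2) + b * ((R ^ 2 - ‖y - x₀‖ ^ 2) / 2)
      ≤ (R ^ 2 - ‖a • x + b • y - x₀‖ ^ 2) / 2 := by
    have : a * ((R ^ 2 - ‖x - x₀‖ ^ 2) / 2) + b * ((R ^ 2 - ‖y - x₀‖ ^ 2) / 2)
        = ((a * R ^ 2 + b * R ^ 2) - (a * ‖x - x₀‖ ^ 2 + b * ‖y - x₀‖ ^ 2)) / 2 := by ring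
    rw [this, hRR]
    linarith
  linarith

set_option maxHeartbeats 1000000 in
lemma psiF_small_on_boundary {ω : Set (EuclideanSpace ℝ (Fin j))} (hωo : IsOpen ω)
    (hωb : IsBounded ω) (hωne : ω.Nonempty) (hωsc : StrictlyConvexSet ω)
    {z : EuclideanSpace ℝ (Fin j)} (hz : z ∈ frontier ω) {c : ℝ} (hc : 0 < c) :
    ∃ t ∈ psiSet ω z, t ≤ c := by
  have hzcl : z ∈ closure ω := hz.1
  have hzno : z ∉ ω := fun h => hz.2 (by rwa [hωo.interior_eq])
  -- separating functional
  obtain ⟨f, hf⟩ := geometric_hahn_banach_open_point (convex_of_strictlyConvexSet hωsc) hωo hzno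
  set v : EuclideanSpace ℝ (Fin j) := (InnerProductSpace.toDual ℝ _).symm f with hv
  have hfv : ∀ w, ⟪v, w⟫ = f w := fun w => InnerProductSpace.toDual_symm_apply
  have hvne : v ≠ 0 := by
    obtain ⟨w₀, hw₀⟩ := hωne
    intro h0
    have := hf w₀ hw₀
    rw [← hfv w₀, ← hfv z, h0] at this
    simp at this
  set ν : EuclideanSpace ℝ (Fin j) := ‖v‖⁻¹ • v with hν
  have hνnorm : ‖ν‖ = 1 := norm_smul_inv_norm hvne
  set g : EuclideanSpace ℝ (Fin j) → ℝ := fun y => ⟪ν, y - z⟫ with hg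
  have hgcont : Continuous g := by
    rw [hg]
    exact continuous_const.inner (continuous_id.sub continuous_const)
  have hglt : ∀ y ∈ ω, g y < 0 := by
    intro y hy
    have h1 : f y < f z := hf y hy
    have : ⟪v, y - z⟫ < 0 := by
      rw [inner_sub_right, hfv, hfv]; linarith
    have hpos : (0 : ℝ) < ‖v‖⁻¹ := inv_pos.mpr (norm_pos_iff.mpr hvne)
    calc g y = ‖v‖⁻¹ * ⟪v, y - z⟫ := by simp only [hg, hν, real_inner_smul_left]
      _ < 0 := by nlinarith
  have hgle : ∀ y ∈ closure ω, g y ≤ 0 := by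
    intro y hy
    have hcl : IsClosed {y : EuclideanSpace ℝ (Fin j) | g y ≤ 0} :=
      isClosed_le hgcont continuous_const
    exact closure_minimal (fun w hw => (hglt w hw).le) hcl hy
  have hgstrict : ∀ y ∈ closure ω, y ≠ z → g y < 0 := by
    intro y hy hyz
    have hmem : ((1 : ℝ) - (1/2 : ℝ)) • y + (1/2 : ℝ) • z ∈ ω :=
      hωsc y hy z hzcl hyz (1/2) (by norm_num) (by norm_num)
    have hm := hglt _ hmem
    have : g (((1 : ℝ) - (1/2 : ℝ)) • y + (1/2 : ℝ) • z) = (1/2 : ℝ) * g y := by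
      rw [hg]
      have : ((1 : ℝ) - (1/2 : ℝ)) • y + (1/2 : ℝ) • z - z = (1/2 : ℝ) • (y - z) := by
        norm_num [smul_sub]; module
      simp only [this, real_inner_smul_right]
    rw [this] at hm
    linarith
  -- bound on diameter
  obtain ⟨r, hr⟩ := (hωb.closure).subset_closedBall z
  set M : ℝ := max r 1 with hM
  have hM1 : 0 < M := lt_of_lt_of_le one_pos (le_max_right r 1)
  have hMb : ∀ y ∈ closure ω, ‖y - z‖ ≤ M := by
    intro y hy
    have := hr hy
    simp only [Metric.mem_closedBall, dist_eq_norm] at this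
    exact this.trans (le_max_left r 1)
  set δ : ℝ := Real.sqrt (c / 2) with hδ
  have hδpos : 0 < δ := Real.sqrt_pos.mpr (by linarith)
  have hδsq : δ ^ 2 = c / 2 := Real.sq_sqrt (by linarith)
  -- uniform negativity away from z
  obtain ⟨m, hm0, hm⟩ : ∃ m : ℝ, 0 < m ∧ ∀ y ∈ closure ω, δ ≤ ‖y - z‖ → g y ≤ -m := by
    set K : Set (EuclideanSpace ℝ (Fin j)) := closure ω ∩ {y | δ ≤ ‖y - z‖} with hK
    have hKcpt : IsCompact K := by
      refine (hωb.isCompact_closure).inter_right ?_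
      have : {y : EuclideanSpace ℝ (Fin j) | δ ≤ ‖y - z‖} = {y | δ ≤ dist y z} := by
        simp [dist_eq_norm]
      rw [this]
      exact isClosed_le continuous_const (by fun_prop)
    rcases K.eq_empty_or_nonempty with hKe | hKne
    · exact ⟨1, one_pos, fun y hy hd => absurd (show y ∈ K from ⟨hy, hd⟩) (by simp [hKe])⟩
    · obtain ⟨y₀, hy₀K, hy₀max⟩ := hKcpt.exists_isMaxOn hKne hgcont.continuousOn
      have hy₀ne : y₀ ≠ z := by
        intro h
        have := hy₀K.2
        rw [h] at this
        simp only [Set.mem_setOf_eq, sub_self, norm_zero] at this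
        linarith
      have hneg : g y₀ < 0 := hgstrict y₀ hy₀K.1 hy₀ne
      exact ⟨-g y₀, by linarith, fun y hy hd => by
        have := hy₀max ⟨hy, hd⟩
        simpa using this.trans_eq (by ring_nf)⟩
  set T : ℝ := M ^ 2 / (2 * m) + 1 with hT
  have hTpos : 0 < T := by positivity
  set R : ℝ := Real.sqrt (T ^ 2 + c) with hR
  have hRpos : 0 < R := Real.sqrt_pos.mpr (by positivity)
  have hRsq : R ^ 2 = T ^ 2 + c := Real.sq_sqrt (by positivity)
  set x₀ : EuclideanSpace ℝ (Fin j) := z - T • ν with hx₀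
  have hexp : ∀ y : EuclideanSpace ℝ (Fin j),
      ‖y - x₀‖ ^ 2 = ‖y - z‖ ^ 2 + 2 * T * g y + T ^ 2 := by
    intro y
    have e1 : y - x₀ = (y - z) + T • ν := by rw [hx₀]; abel
    rw [e1, norm_add_sq_real, real_inner_smul_right, norm_smul, hνnorm]
    have : |T| = T := abs_of_pos hTpos
    rw [Real.norm_eq_abs, this]
    have : ⟪y - z, ν⟫ = g y := real_inner_comm _ _
    rw [this]; ring
  have hTm : 2 * T * m = M ^ 2 + 2 * m := by rw [hT]; field_simp
  clear_value v ν g M δ T R x₀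
  have hposω : ∀ y ∈ ω, 0 < (R ^ 2 - ‖y - x₀‖ ^ 2) / 2 := by
    intro y hy
    have hycl : y ∈ closure ω := subset_closure hy
    have hkey : ‖y - z‖ ^ 2 + 2 * T * g y < c := by
      rcases le_or_gt ‖y - z‖ δ with hnear | hfar
      · have h1 : ‖y - z‖ ^ 2 ≤ c / 2 := by
          rw [← hδsq]
          exact pow_le_pow_left₀ (norm_nonneg _) hnear 2
        have h2 : g y < 0 := hglt y hy
        nlinarith
      · have h1 : ‖y - z‖ ^ 2 ≤ M ^ 2 := by
          have := hMb y hycl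
          nlinarith [norm_nonneg (y - z)]
        have h2 : g y ≤ -m := hm y hycl hfar.le
        have h5 : 2 * T * g y ≤ 2 * T * (-m) :=
          mul_le_mul_of_nonneg_left h2 (by positivity)
        linarith [hTm]
    rw [hexp y, hRsq]
    linarith
  refine ⟨(R ^ 2 - ‖z - x₀‖ ^ 2) / 2, ⟨R, x₀, hRpos, hposω, rfl⟩, ?_⟩
  have hz0 : g z = 0 := by simp [hg]
  rw [hexp z, hRsq, hz0]
  simp only [sub_self, norm_zero]
  nlinarith

end PsiMain

/-- **Theorem (`supersolution1`).** For a bounded strictly convex domain `ω ⊆ ℝ^j`, the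
function `ψ` vanishes on `∂ω`; in particular `ψ ∈ C(closure ω)`. -/
theorem psi_eq_zero_on_boundary {j : ℕ} (hj : 1 ≤ j)
    (ω : Set (EuclideanSpace ℝ (Fin j))) (hωo : IsOpen ω) (hωb : IsBounded ω)
    (hωne : ω.Nonempty) (hωsc : StrictlyConvexSet ω) :
    (∀ x ∈ frontier ω, psiF ω x = 0) ∧ ContinuousOn (psiF ω) (closure ω) := by
  have hbd : ∀ x ∈ frontier ω, psiF ω x = 0 := by
    intro z hz
    refine le_antisymm ?_ (psiF_nonneg hωb hz.1)
    refine le_of_forall_pos_le_add ?_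
    intro c hc
    obtain ⟨t, htmem, htle⟩ := psiF_small_on_boundary hωo hωb hωne hωsc hz hc
    have := psiF_le hz.1 htmem
    linarith
  refine ⟨hbd, ?_⟩
  intro x hx
  by_cases hxω : x ∈ ω
  · -- interior point: concavity gives continuity
    have hconc := psiF_concaveOn hωb hωsc
    have hcont : ContinuousOn (psiF ω) (interior (closure ω)) := hconc.continuousOn_interior
    have hsub : ω ⊆ interior (closure ω) := interior_maximal subset_closure hωo
    exact ((hcont.continuousAt (isOpen_interior.mem_nhds (hsub hxω))).continuousWithinAt)
  · -- boundary point
    have hxf : x ∈ frontier ω := ⟨hx, by rwa [hωo.interior_eq]⟩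
    have hx0 : psiF ω x = 0 := hbd x hxf
    rw [Metric.continuousWithinAt_iff]
    intro ε hε
    obtain ⟨t, htmem, htle⟩ := psiF_small_on_boundary hωo hωb hωne hωsc hxf (half_pos hε)
    obtain ⟨R, x₀, hR, hpos, hteq⟩ := htmem
    set f : EuclideanSpace ℝ (Fin j) → ℝ := fun y => (R ^ 2 - ‖y - x₀‖ ^ 2) / 2 with hf
    have hfx : f x ≤ ε / 2 := by rw [hf]; simpa [← hteq] using htle
    have hfc : ContinuousAt f x := by fun_prop
    have hε' : 0 < ε - f x := by linarith
    obtain ⟨δ, hδ, hδf⟩ := Metric.continuousAt_iff.mp hfc (ε - f x) hε'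
    refine ⟨δ, hδ, ?_⟩
    intro y hy hdy
    have h1 : 0 ≤ psiF ω y := psiF_nonneg hωb hy
    have h2 : psiF ω y ≤ f y := psiF_le hy ⟨R, x₀, hR, hpos, rfl⟩
    have h3 : f y < ε := by
      have := hδf hdy
      rw [Real.dist_eq, abs_lt] at this
      linarith
    rw [hx0, Real.dist_eq, abs_lt]
    constructor <;> linarith
end
end

section
/- Let ω ⊂ ℝ^j be a bounded strictly convex domain with j ≤ N, let ψ be the infimum over the family ℱ of concave quadratics positive on ω, set C = ω × ℝ^{N−j} and define Ψ on closure(C) = closure(ω) × ℝ^{N−j} by Ψ(x) = ψ(x₁,…,x_j). Let k be an integer with N − j < k ≤ N. Then Ψ is continuous on closure(C) and Ψ is a viscosity supersolution of 𝒫ₖ⁺(D²Ψ) = −1 in ω × ℝ^{N−j} (i.e. 𝒫ₖ⁺(D²Ψ) ≤ −1 in the viscosity sense). -/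
noncomputable section

open Metric Set Filter Bornology
open scoped RealInnerProductSpace

namespace CylSupAux

open Metric Set Filter Bornology intervalIntegral
open scoped RealInnerProductSpace

variable {j : ℕ}

/-- admissible pairs -/
def Adm (ω : Set (EuclideanSpace ℝ (Fin j))) : Set (ℝ × EuclideanSpace ℝ (Fin j)) :=
  {p | 0 < p.1 ∧ ∀ y ∈ ω, 0 < (p.1 ^ 2 - ‖y - p.2‖ ^ 2) / 2}

def val (p : ℝ × EuclideanSpace ℝ (Fin j)) (x : EuclideanSpace ℝ (Fin j)) : ℝ :=
  (p.1 ^ 2 - ‖x - p.2‖ ^ 2) / 2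

lemma psiSet_eq (ω : Set (EuclideanSpace ℝ (Fin j))) (x : EuclideanSpace ℝ (Fin j)) :
    {t : ℝ | ∃ (R : ℝ) (x₀ : EuclideanSpace ℝ (Fin j)), 0 < R ∧
      (∀ y ∈ ω, 0 < (R ^ 2 - ‖y - x₀‖ ^ 2) / 2) ∧ t = (R ^ 2 - ‖x - x₀‖ ^ 2) / 2}
    = (fun p => val p x) '' Adm ω := by
  ext t
  constructor
  · rintro ⟨R, x₀, hR, hpos, rfl⟩; exact ⟨(R, x₀), ⟨hR, hpos⟩, rfl⟩
  · rintro ⟨⟨R, x₀⟩, ⟨hR, hpos⟩, rfl⟩; exact ⟨R, x₀, hR, hpos, rfl⟩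

lemma val_continuous (p : ℝ × EuclideanSpace ℝ (Fin j)) : Continuous (val p) := by
  unfold val; fun_prop

lemma val_nonneg {ω : Set (EuclideanSpace ℝ (Fin j))} {p : ℝ × EuclideanSpace ℝ (Fin j)}
    (hp : p ∈ Adm ω) {x : EuclideanSpace ℝ (Fin j)} (hx : x ∈ closure ω) : 0 ≤ val p x := by
  have h : closure ω ⊆ {y | 0 ≤ val p y} := by
    apply closure_minimal
    · intro y hy; exact (hp.2 y hy).le
    · exact isClosed_le continuous_const (val_continuous p)
  exact h hx

lemma adm_nonempty {ω : Set (EuclideanSpace ℝ (Fin j))} (hωb : IsBounded ω) :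
    (Adm ω).Nonempty := by
  obtain ⟨r, hr⟩ := hωb.subset_closedBall 0
  refine ⟨(max r 0 + 1, 0), by positivity, fun y hy => ?_⟩
  have h1 : ‖y - 0‖ ≤ max r 0 := le_trans (by simpa [dist_eq_norm] using hr hy) (le_max_left _ _)
  have h2 : ‖y - (0 : EuclideanSpace ℝ (Fin j))‖ < max r 0 + 1 := lt_of_le_of_lt h1 (by linarith)
  have h3 : (0:ℝ) ≤ max r 0 := le_max_right _ _
  have := mul_self_lt_mul_self (norm_nonneg _) h2
  nlinarith [norm_nonneg (y - (0:EuclideanSpace ℝ (Fin j)))]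

lemma bddBelow_vals {ω : Set (EuclideanSpace ℝ (Fin j))} {x : EuclideanSpace ℝ (Fin j)}
    (hx : x ∈ closure ω) : BddBelow ((fun p => val p x) '' Adm ω) := by
  refine ⟨0, ?_⟩
  rintro t ⟨p, hp, rfl⟩
  exact val_nonneg hp hx

lemma psi_eq (ω : Set (EuclideanSpace ℝ (Fin j))) (x : EuclideanSpace ℝ (Fin j)) :
    psiF ω x = sInf ((fun p => val p x) '' Adm ω) := by
  rw [psiF, psiSet_eq]

lemma psi_nonneg {ω : Set (EuclideanSpace ℝ (Fin j))} (hωb : IsBounded ω)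
    {x : EuclideanSpace ℝ (Fin j)} (hx : x ∈ closure ω) : 0 ≤ psiF ω x := by
  rw [psi_eq]
  exact le_csInf ((adm_nonempty hωb).image _) (by rintro t ⟨p, hp, rfl⟩; exact val_nonneg hp hx)

lemma psi_le {ω : Set (EuclideanSpace ℝ (Fin j))} {p : ℝ × EuclideanSpace ℝ (Fin j)}
    (hp : p ∈ Adm ω) {x : EuclideanSpace ℝ (Fin j)} (hx : x ∈ closure ω) :
    psiF ω x ≤ val p x := by
  rw [psi_eq]
  exact csInf_le (bddBelow_vals hx) ⟨p, hp, rfl⟩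

lemma exists_near {ω : Set (EuclideanSpace ℝ (Fin j))} (hωb : IsBounded ω)
    (x : EuclideanSpace ℝ (Fin j)) {ε : ℝ} (hε : 0 < ε) :
    ∃ p ∈ Adm ω, val p x < psiF ω x + ε := by
  rw [psi_eq]
  obtain ⟨t, ht, hlt⟩ := Real.lt_sInf_add_pos ((adm_nonempty hωb).image (fun p => val p x)) hε
  obtain ⟨p, hp, rfl⟩ := ht
  exact ⟨p, hp, hlt⟩

lemma sc_convex {s : Set (EuclideanSpace ℝ (Fin j))}
    (h : StrictlyConvexSet s) : Convex ℝ s := by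
  intro x hx y hy a b ha hb hab
  rcases eq_or_lt_of_le hb with hb0 | hb0
  · have ha1 : a = 1 := by linarith
    simp [← hb0, ha1, hx]
  rcases eq_or_lt_of_le ha with ha0 | ha0
  · have hb1 : b = 1 := by linarith
    simp [← ha0, hb1, hy]
  by_cases hxy : x = y
  · subst hxy
    have hc : a • x + b • x = x := by rw [← add_smul, hab, one_smul]
    rw [hc]; exact hx
  · have hin := h x (subset_closure hx) y (subset_closure hy) hxy b hb0 (by linarith)
    have hab' : (1 : ℝ) - b = a := by linarith
    rwa [hab'] at hin

set_option maxHeartbeats 1000000 in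
lemma boundary_adm (ω : Set (EuclideanSpace ℝ (Fin j))) (hωo : IsOpen ω) (hωb : IsBounded ω)
    (hωsc : StrictlyConvexSet ω) (hconv : Convex ℝ ω)
    {z : EuclideanSpace ℝ (Fin j)} (hz : z ∈ closure ω) (hzω : z ∉ ω) {ε : ℝ} (hε : 0 < ε) :
    ∃ p ∈ Adm ω, val p z = ε / 2 := by
  obtain ⟨f, hf⟩ := geometric_hahn_banach_open_point hconv hωo hzω
  set e : EuclideanSpace ℝ (Fin j) :=
    (InnerProductSpace.toDual ℝ (EuclideanSpace ℝ (Fin j))).symm f with he_def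
  have he : ∀ x, ⟪e, x⟫ = f x := fun x => InnerProductSpace.toDual_symm_apply
  have hclos : ∀ y ∈ closure ω, f y ≤ f z := by
    intro y hy
    have h : closure ω ⊆ {y | f y ≤ f z} :=
      closure_minimal (fun a ha => (hf a ha).le) (isClosed_le f.continuous continuous_const)
    exact h hy
  have hstrict : ∀ y ∈ closure ω, y ≠ z → f y < f z := by
    intro y hy hyz
    rcases lt_or_eq_of_le (hclos y hy) with h | h
    · exact h
    · exfalso
      have hm : (1 - (1/2 : ℝ)) • z + (1/2 : ℝ) • y ∈ ω :=
        hωsc z hz y hy (Ne.symm hyz) (1/2) (by norm_num) (by norm_num)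
      have := hf _ hm
      simp only [map_add, map_smul, smul_eq_mul] at this
      rw [h] at this; norm_num at this; linarith
  have hcpt : IsCompact (closure ω) :=
    Metric.isCompact_of_isClosed_isBounded isClosed_closure hωb.closure
  obtain ⟨r, hr⟩ := hωb.closure.subset_closedBall z
  set D : ℝ := (max r 0) ^ 2 with hD_def
  have hD : ∀ y ∈ closure ω, ‖y - z‖ ^ 2 ≤ D := by
    intro y hy
    have : dist y z ≤ max r 0 := le_trans (hr hy) (le_max_left _ _)
    rw [dist_eq_norm] at this
    exact pow_le_pow_left₀ (norm_nonneg _) this 2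
  have hD0 : 0 ≤ D := sq_nonneg _
  set K : Set (EuclideanSpace ℝ (Fin j)) := closure ω ∩ {y | ε ≤ ‖y - z‖ ^ 2} with hK_def
  have hKcpt : IsCompact K := hcpt.inter_right (isClosed_le continuous_const (by fun_prop))
  have hc : ∃ c : ℝ, 0 < c ∧ ∀ y ∈ K, c ≤ f z - f y := by
    rcases K.eq_empty_or_nonempty with hKe | hKne
    · exact ⟨1, one_pos, by rw [hKe]; simp⟩
    · obtain ⟨y₀, hy₀K, hy₀min⟩ := hKcpt.exists_isMinOn hKne
        (Continuous.continuousOn (by continuity : Continuous fun y => f z - f y))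
      refine ⟨f z - f y₀, ?_, fun y hy => hy₀min hy⟩
      have hy₀z : y₀ ≠ z := by
        intro h
        have h2 := hy₀K.2
        rw [h] at h2
        simp at h2; linarith
      have := hstrict y₀ hy₀K.1 hy₀z
      linarith
  obtain ⟨c, hc0, hcK⟩ := hc
  set s : ℝ := (D + 1) / (2 * c) with hs_def
  have hs0 : 0 < s := by positivity
  set x₀ : EuclideanSpace ℝ (Fin j) := z - s • e with hx₀_def
  have hRpos : 0 < s ^ 2 * ‖e‖ ^ 2 + ε := by positivity
  set R : ℝ := Real.sqrt (s ^ 2 * ‖e‖ ^ 2 + ε) with hR_def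
  have hR : 0 < R := Real.sqrt_pos.2 hRpos
  have hR2 : R ^ 2 = s ^ 2 * ‖e‖ ^ 2 + ε := Real.sq_sqrt hRpos.le
  have hexp : ∀ y : EuclideanSpace ℝ (Fin j),
      ‖y - x₀‖ ^ 2 = ‖y - z‖ ^ 2 + 2 * s * (f y - f z) + s ^ 2 * ‖e‖ ^ 2 := by
    intro y
    have h1 : y - x₀ = (y - z) + s • e := by rw [hx₀_def]; abel
    rw [h1, norm_add_sq_real]
    have h2 : ⟪y - z, s • e⟫ = s * (f y - f z) := by
      rw [real_inner_smul_right, real_inner_comm, he, map_sub]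
    have h3 : ‖s • e‖ ^ 2 = s ^ 2 * ‖e‖ ^ 2 := by
      rw [norm_smul, mul_pow, Real.norm_eq_abs, sq_abs]
    rw [h2, h3]; ring
  have hzx₀ : ‖z - x₀‖ ^ 2 = s ^ 2 * ‖e‖ ^ 2 := by
    have h4 := hexp z
    simpa using h4
  have hKmem : ∀ y, y ∈ closure ω → ε ≤ ‖y - z‖ ^ 2 → y ∈ K := fun y h1 h2 => ⟨h1, h2⟩
  clear_value D K s e x₀ R
  refine ⟨(R, x₀), ⟨hR, ?_⟩, ?_⟩
  · intro y hy
    have hyc : y ∈ closure ω := subset_closure hy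
    have hkey : ‖y - z‖ ^ 2 + 2 * s * (f y - f z) < ε := by
      rcases lt_or_ge (‖y - z‖ ^ 2) ε with h | h
      · have := hf y hy
        nlinarith
      · have hyK : y ∈ K := hKmem y hyc h
        have h1 := hcK y hyK
        have h2 := hD y hyc
        have h5 : ‖y - z‖ ^ 2 + 2 * s * (f y - f z) ≤ D - 2 * s * c := by nlinarith
        have h3 : 2 * s * c = D + 1 := by
          rw [hs_def]; field_simp
        linarith
    show 0 < (R ^ 2 - ‖y - x₀‖ ^ 2) / 2
    rw [hR2, hexp y]
    linarith
  · show (R ^ 2 - ‖z - x₀‖ ^ 2) / 2 = ε / 2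
    rw [hR2, hzx₀]
    linarith

lemma psi_boundary (ω : Set (EuclideanSpace ℝ (Fin j))) (hωo : IsOpen ω) (hωb : IsBounded ω)
    (hωsc : StrictlyConvexSet ω)
    {z : EuclideanSpace ℝ (Fin j)} (hz : z ∈ closure ω) (hzω : z ∉ ω) : psiF ω z = 0 := by
  refine le_antisymm ?_ (psi_nonneg hωb hz)
  apply le_of_forall_pos_le_add
  intro ε hε
  obtain ⟨p, hp, hval⟩ := boundary_adm ω hωo hωb hωsc (sc_convex hωsc) hz hzω hε
  have := psi_le hp hz
  rw [hval] at this
  linarith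

lemma val_add_sq (p : ℝ × EuclideanSpace ℝ (Fin j)) (x : EuclideanSpace ℝ (Fin j)) :
    val p x + ‖x‖ ^ 2 / 2 = (p.1 ^ 2 - ‖p.2‖ ^ 2) / 2 + ⟪x, p.2⟫ := by
  have h : ‖x - p.2‖ ^ 2 = ‖x‖ ^ 2 - 2 * ⟪x, p.2⟫ + ‖p.2‖ ^ 2 := norm_sub_sq_real x p.2
  rw [val, h]; ring

lemma psi_concave (ω : Set (EuclideanSpace ℝ (Fin j))) (hωb : IsBounded ω)
    (hconv : Convex ℝ (closure ω)) :
    ConcaveOn ℝ (closure ω) (fun x => psiF ω x + ‖x‖ ^ 2 / 2) := by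
  refine ⟨hconv, fun x hx y hy a b ha hb hab => ?_⟩
  simp only [smul_eq_mul]
  rw [psi_eq ω (a • x + b • y), ← sub_le_iff_le_add]
  apply le_csInf ((adm_nonempty hωb).image _)
  rintro t ⟨p, hp, rfl⟩
  have h1 : psiF ω x ≤ val p x := psi_le hp hx
  have h2 : psiF ω y ≤ val p y := psi_le hp hy
  have key : val p (a • x + b • y) + ‖a • x + b • y‖ ^ 2 / 2
      = a * (val p x + ‖x‖ ^ 2 / 2) + b * (val p y + ‖y‖ ^ 2 / 2) := by
    rw [val_add_sq, val_add_sq, val_add_sq]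
    rw [inner_add_left, real_inner_smul_left, real_inner_smul_left]
    ring_nf
    nlinarith [hab]
  nlinarith [key]

lemma psi_continuousOn (ω : Set (EuclideanSpace ℝ (Fin j))) (hωo : IsOpen ω) (hωb : IsBounded ω)
    (hωsc : StrictlyConvexSet ω) : ContinuousOn (psiF ω) (closure ω) := by
  have hconv : Convex ℝ ω := sc_convex hωsc
  intro z hz
  by_cases hzω : z ∈ ω
  · have hconc : ConcaveOn ℝ (closure ω) (fun x => psiF ω x + ‖x‖ ^ 2 / 2) :=
      psi_concave ω hωb hconv.closure
    have hconcω : ConcaveOn ℝ ω (fun x => psiF ω x + ‖x‖ ^ 2 / 2) :=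
      hconc.subset subset_closure hconv
    have hcont : ContinuousOn (fun x => psiF ω x + ‖x‖ ^ 2 / 2) ω := hconcω.continuousOn hωo
    have hca : ContinuousAt (fun x => psiF ω x + ‖x‖ ^ 2 / 2) z :=
      hcont.continuousAt (hωo.mem_nhds hzω)
    have h2 : ContinuousAt (fun x : EuclideanSpace ℝ (Fin j) => ‖x‖ ^ 2 / 2) z := by fun_prop
    have h3 : ContinuousAt (psiF ω) z := by
      have h4 := hca.sub h2
      have h5 : (fun x : EuclideanSpace ℝ (Fin j) => (psiF ω x + ‖x‖ ^ 2 / 2) - ‖x‖ ^ 2 / 2)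
          = psiF ω := by funext x; ring
      rw [← h5]; exact h4
    exact h3.continuousWithinAt
  · have h0 : psiF ω z = 0 := psi_boundary ω hωo hωb hωsc hz hzω
    have : Filter.Tendsto (psiF ω) (nhdsWithin z (closure ω)) (nhds 0) := by
      refine tendsto_order.2 ⟨?_, ?_⟩
      · intro a ha
        apply eventually_nhdsWithin_of_forall
        intro x hx
        exact lt_of_lt_of_le ha (psi_nonneg hωb hx)
      · intro a ha
        obtain ⟨p, hp, hval⟩ := boundary_adm ω hωo hωb hωsc hconv hz hzω ha
        have hopen : IsOpen {x | val p x < a} := isOpen_lt (val_continuous p) continuous_const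
        have hmem : z ∈ {x | val p x < a} := by
          simp only [mem_setOf_eq, hval]; linarith
        have hev : ∀ᶠ x in nhdsWithin z (closure ω), val p x < a :=
          eventually_nhdsWithin_of_eventually_nhds (hopen.eventually_mem hmem)
        filter_upwards [hev, self_mem_nhdsWithin] with x h1 h2
        exact lt_of_le_of_lt (psi_le hp h2) h1
    unfold ContinuousWithinAt
    rwa [h0]


lemma deriv2_le {g g' : ℝ → ℝ} {a b t₁ : ℝ} (ht₁ : 0 < t₁)
    (hg'd : ∀ t ∈ Icc 0 t₁, HasDerivAt g (g' t) t)
    (hg'c : ContinuousOn g' (Icc 0 t₁))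
    (hg'0 : HasDerivAt g' b 0) (hg'00 : g' 0 = 0)
    (hub : ∀ t, t ∈ Ioo 0 t₁ → g t - g 0 ≤ a * t ^ 2 + 2 * t ^ 3) :
    b ≤ 2 * a := by
  have key : ∀ ε : ℝ, 0 < ε → b ≤ 2 * a + 5 * ε := by
    intro ε hε
    -- slope bound near 0
    have hslope : Filter.Tendsto (slope g' 0) (nhdsWithin 0 {(0:ℝ)}ᶜ) (nhds b) :=
      hasDerivAt_iff_tendsto_slope.1 hg'0
    have hev : ∀ᶠ t in nhdsWithin 0 {(0:ℝ)}ᶜ, b - ε < slope g' 0 t :=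
      hslope.eventually (eventually_gt_nhds (by linarith))
    have hev2 : ∀ᶠ t in nhdsWithin (0:ℝ) (Ioi 0), b - ε < slope g' 0 t :=
      nhdsWithin_mono _ (fun t ht => by simpa using (ht : (0:ℝ) < t).ne') hev
    obtain ⟨u, hu, huIoo⟩ := mem_nhdsGT_iff_exists_Ioo_subset.1 hev2
    have hu0 : 0 < u := hu
    -- choose t
    set t : ℝ := min (min (t₁ / 2) (u / 2)) ε with hts
    have ht0 : 0 < t := by positivity
    have htt₁ : t < t₁ := lt_of_le_of_lt (le_trans (min_le_left _ _) (min_le_left _ _)) (by linarith)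
    have htu : t < u := lt_of_le_of_lt (le_trans (min_le_left _ _) (min_le_right _ _)) (by linarith)
    have htε : t ≤ ε := min_le_right _ _
    -- pointwise lower bound for g' on [0,t]
    have hlow : ∀ s ∈ Icc (0:ℝ) t, (b - ε) * s ≤ g' s := by
      intro s hs
      rcases eq_or_lt_of_le hs.1 with h0 | h0
      · rw [← h0, hg'00]; simp
      · have hsu : s ∈ Ioo (0:ℝ) u := ⟨h0, lt_of_le_of_lt hs.2 htu⟩
        have := huIoo hsu
        simp only [Set.mem_setOf_eq] at this
        have hsl : slope g' 0 s = g' s / s := by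
          rw [slope_def_field]; rw [hg'00]; field_simp; ring
        rw [hsl] at this
        rw [lt_div_iff₀ h0] at this
        linarith [this]
    -- FTC
    have hint : IntervalIntegrable g' MeasureTheory.volume 0 t :=
      (hg'c.mono (by rw [uIcc_of_le ht0.le]; exact Icc_subset_Icc le_rfl htt₁.le)).intervalIntegrable
    have hftc : ∫ s in (0:ℝ)..t, g' s = g t - g 0 := by
      apply integral_eq_sub_of_hasDerivAt
      · intro s hs
        rw [uIcc_of_le ht0.le] at hs
        exact hg'd s ⟨hs.1, le_trans hs.2 htt₁.le⟩
      · exact hint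
    have hmono : ∫ s in (0:ℝ)..t, (b - ε) * s ≤ ∫ s in (0:ℝ)..t, g' s := by
      apply integral_mono_on ht0.le _ hint
      · intro s hs; exact hlow s hs
      · exact (Continuous.continuousOn (by continuity)).intervalIntegrable
    have hval : ∫ s in (0:ℝ)..t, (b - ε) * s = (b - ε) * (t ^ 2 / 2) := by
      rw [integral_const_mul, integral_id]; ring
    have hub' := hub t ⟨ht0, htt₁⟩
    rw [hval, hftc] at hmono
    nlinarith [mul_pos ht0 ht0, mul_le_mul_of_nonneg_right htε (sq_nonneg t), mul_pos (mul_pos ht0 ht0) ht0]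
  by_contra h
  push_neg at h
  have := key ((b - 2*a)/6) (by linarith)
  linarith



lemma euc_parseval {N : ℕ} (b : OrthonormalBasis (Fin N) ℝ (Euc N)) (l : Fin N) :
    ∑ i, (b i l) ^ 2 = 1 := by
  have h := b.sum_inner_mul_inner (EuclideanSpace.single l (1:ℝ)) (EuclideanSpace.single l (1:ℝ))
  have h2 : ∀ i, ⟪EuclideanSpace.single l (1:ℝ), b i⟫ = b i l := by
    intro i
    rw [EuclideanSpace.inner_single_left]
    simp
  have h3 : ⟪EuclideanSpace.single l (1:ℝ), EuclideanSpace.single l (1:ℝ)⟫ = 1 := by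
    rw [EuclideanSpace.inner_single_left]; simp [EuclideanSpace.single_apply]
  rw [h3] at h
  calc ∑ i, (b i l)^2 = ∑ i, ⟪EuclideanSpace.single l (1:ℝ), b i⟫ * ⟪b i, EuclideanSpace.single l (1:ℝ)⟫ := by
        apply Finset.sum_congr rfl
        intro i _
        rw [h2 i, real_inner_comm, h2 i]; ring
    _ = 1 := h

lemma quad_bound {N j k : ℕ} (hj : j ≤ N) (hNjk : N < k + j) (hkN : k ≤ N)
    (M : Matrix (Fin N) (Fin N) ℝ) (hM : M.IsHermitian)
    (hQ : ∀ u : Euc N, ∑ i, ∑ l, u i * M i l * u l ≤ - ∑ l : Fin j, (u (Fin.castLE hj l)) ^ 2) :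
    Pkp N k M + 1 ≤ 0 := by
  rw [Pkp, dif_pos hM]
  rw [show (0:ℝ) = -1 + 1 by ring]
  apply add_le_add_left
  set b := hM.eigenvectorBasis with hb
  -- each eigenvalue equals the quadratic form at the eigenvector
  have hlam : ∀ i, hM.eigenvalues i = ∑ m, ∑ l, (b i) m * M m l * (b i) l := by
    intro i
    have hmv := hM.mulVec_eigenvectorBasis i
    have hnorm : ∑ m, ((b i) m) ^ 2 = 1 := by
      have h1 : ‖b i‖ = 1 := b.orthonormal.1 i
      have h2 : ⟪b i, b i⟫ = 1 := by
        rw [real_inner_self_eq_norm_sq, h1]; norm_num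
      rw [← h2, PiLp.inner_apply]
      apply Finset.sum_congr rfl; intro m _; simp [RCLike.inner_apply]
    have key : ∀ m, ∑ l, M m l * (b i) l = hM.eigenvalues i * (b i) m := by
      intro m
      have := congrFun hmv m
      simpa [Matrix.mulVec, dotProduct] using this
    calc hM.eigenvalues i = hM.eigenvalues i * ∑ m, ((b i) m)^2 := by rw [hnorm]; ring
      _ = ∑ m, (b i) m * (hM.eigenvalues i * (b i) m) := by rw [Finset.mul_sum]; apply Finset.sum_congr rfl; intros; ring
      _ = ∑ m, (b i) m * ∑ l, M m l * (b i) l := by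
          apply Finset.sum_congr rfl; intro m _; rw [key m]
      _ = ∑ m, ∑ l, (b i) m * M m l * (b i) l := by
          apply Finset.sum_congr rfl; intro m _; rw [Finset.mul_sum]; apply Finset.sum_congr rfl; intros; ring
  -- P u := sum of first j squared coords
  set P : Euc N → ℝ := fun u => ∑ l : Fin j, (u (Fin.castLE hj l)) ^ 2 with hP
  have hP1 : ∀ u : Euc N, (∑ m, (u m)^2 = 1) → P u ≤ 1 := by
    intro u hu
    show ∑ l : Fin j, (u (Fin.castLE hj l)) ^ 2 ≤ 1
    rw [← hu]
    have : ∑ l : Fin j, (u (Fin.castLE hj l)) ^ 2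
        = ∑ m ∈ Finset.univ.map (Fin.castLEEmb hj), (u m) ^ 2 := by
      rw [Finset.sum_map]; rfl
    rw [this]
    apply Finset.sum_le_sum_of_subset_of_nonneg (Finset.subset_univ _)
    intros; positivity
  have hPsum : ∑ i, P (b i) = j := by
    rw [hP]
    rw [Finset.sum_comm]
    rw [Finset.sum_congr rfl (fun l _ => euc_parseval b (Fin.castLE hj l))]
    simp
  apply csSup_le
  · obtain ⟨s, _, hs⟩ := Finset.exists_subset_card_eq (s := (Finset.univ : Finset (Fin N))) (n := k) (by simpa using hkN)
    exact ⟨∑ i ∈ s, hM.eigenvalues i, s, hs, rfl⟩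
  · rintro t ⟨s, hcard, rfl⟩
    have hnorm1 : ∀ i, ∑ m, ((b i) m)^2 = 1 := by
      intro i
      have h1 : ‖b i‖ = 1 := b.orthonormal.1 i
      have h2 : ⟪b i, b i⟫ = 1 := by rw [real_inner_self_eq_norm_sq, h1]; norm_num
      rw [← h2, PiLp.inner_apply]
      apply Finset.sum_congr rfl; intro m _; simp [RCLike.inner_apply]
    have h1 : ∑ i ∈ s, hM.eigenvalues i ≤ - ∑ i ∈ s, P (b i) := by
      rw [← Finset.sum_neg_distrib]
      apply Finset.sum_le_sum
      intro i _
      rw [hlam i]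
      exact hQ (b i)
    have h2 : ∑ i ∈ sᶜ, P (b i) ≤ (N - k : ℝ) := by
      have hcc : (sᶜ.card : ℝ) = (N - k : ℝ) := by
        rw [Finset.card_compl, hcard]
        simp only [Fintype.card_fin]
        rw [Nat.cast_sub hkN]
      calc ∑ i ∈ sᶜ, P (b i) ≤ ∑ i ∈ sᶜ, 1 := Finset.sum_le_sum (fun i _ => hP1 (b i) (hnorm1 i))
        _ = (sᶜ.card : ℝ) := by simp
        _ = _ := hcc
    have h3 : ∑ i ∈ s, P (b i) + ∑ i ∈ sᶜ, P (b i) = (j:ℝ) := by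
      rw [Finset.sum_add_sum_compl]; exact_mod_cast hPsum
    have h4 : (N:ℝ) + 1 ≤ (k:ℝ) + (j:ℝ) := by exact_mod_cast hNjk
    linarith


lemma euc_norm_sq {n : ℕ} (x : EuclideanSpace ℝ (Fin n)) : ‖x‖ ^ 2 = ∑ i, (x i) ^ 2 := by
  rw [← real_inner_self_eq_norm_sq, PiLp.inner_apply]
  apply Finset.sum_congr rfl; intro m _; simp [RCLike.inner_apply]

lemma euc_decomp {n : ℕ} (u : EuclideanSpace ℝ (Fin n)) :
    u = ∑ i, u i • EuclideanSpace.single i (1:ℝ) := by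
  have h := (EuclideanSpace.basisFun (Fin n) ℝ).sum_repr u
  conv_lhs => rw [← h]
  apply Finset.sum_congr rfl
  intro i _
  rw [EuclideanSpace.basisFun_repr, EuclideanSpace.basisFun_apply]

end CylSupAux

open CylSupAux
set_option maxHeartbeats 1000000

/-- **Lemma (`funPsi`).** Let `ω ⊆ ℝ^j` be a bounded strictly convex domain, `j ≤ N`,
`C = ω × ℝ^{N-j}` and `Ψ(x) = ψ(x₁,…,x_j)`. If `N - j < k ≤ N` then `Ψ` is continuous on
`closure C` and `𝒫ₖ⁺(D²Ψ) ≤ -1` in `C` in the viscosity sense. -/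
theorem cylinder_supersolution {N j k : ℕ} (hj1 : 1 ≤ j) (hj : j ≤ N)
    (hjk : N - j < k) (hkN : k ≤ N)
    (ω : Set (EuclideanSpace ℝ (Fin j))) (hωo : IsOpen ω) (hωb : IsBounded ω)
    (hωne : ω.Nonempty) (hωsc : StrictlyConvexSet ω)
    (C : Set (Euc N))
    (hC : C = {x : Euc N | (WithLp.toLp 2 (fun i : Fin j => x (Fin.castLE hj i)) : EuclideanSpace ℝ (Fin j)) ∈ ω})
    (Ψ : Euc N → ℝ)
    (hΨ : Ψ = fun x : Euc N => psiF ω (WithLp.toLp 2 (fun i : Fin j => x (Fin.castLE hj i)))) :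
    ContinuousOn Ψ (closure C) ∧ SuperSol C (fun _ _ _ X => Pkp N k X + 1) Ψ := by
    classical
  set π : Euc N → EuclideanSpace ℝ (Fin j) :=
    fun x => WithLp.toLp 2 (fun i : Fin j => x (Fin.castLE hj i)) with hπ
  have hπcont : Continuous π :=
    (PiLp.continuous_toLp 2 _).comp (continuous_pi fun i => PiLp.continuous_apply 2 _ _)
  have hCpre : C = π ⁻¹' ω := hC
  have hCo : IsOpen C := by rw [hCpre]; exact hωo.preimage hπcont
  have hCsub : closure C ⊆ π ⁻¹' (closure ω) := by
    rw [hCpre]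
    exact closure_minimal (preimage_mono subset_closure) (isClosed_closure.preimage hπcont)
  have hπadd : ∀ (x v : Euc N) (t : ℝ), π (x + t • v) = π x + t • π v := fun x v t => by ext i; simp [hπ]
  have hπneg : ∀ v : Euc N, π (-v) = - π v := fun v => by ext i; simp [hπ]
  constructor
  · rw [hΨ]
    exact (psi_continuousOn ω hωo hωb hωsc).comp hπcont.continuousOn hCsub
  · intro x₀ hx₀ φ hφ hmin
    show Pkp N k (hess φ x₀) + 1 ≤ 0
    obtain ⟨u, hu_nhds, hcdu⟩ := hφ.contDiffOn le_rfl (by simp)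
    set U : Set (Euc N) := interior u ∩ C with hU
    have hUo : IsOpen U := isOpen_interior.inter hCo
    have hx₀U : x₀ ∈ U := ⟨mem_interior_iff_mem_nhds.2 hu_nhds, hx₀⟩
    have hcdU : ContDiffOn ℝ 2 φ U :=
      (hcdu.mono interior_subset).mono inter_subset_left
    have hdiff : ∀ x ∈ U, HasFDerivAt φ (fderiv ℝ φ x) x := by
      intro x hx
      have h1 : DifferentiableOn ℝ φ U := hcdU.differentiableOn (by norm_num)
      exact ((h1 x hx).differentiableAt (hUo.mem_nhds hx)).hasFDerivAt
    set B := fderiv ℝ (fderiv ℝ φ) x₀ with hB_def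
    have hBd : DifferentiableAt ℝ (fderiv ℝ φ) x₀ :=
      (hφ.fderiv_right (m := 1) (by norm_num)).differentiableAt (by norm_num)
    have hB : HasFDerivAt (fderiv ℝ φ) B x₀ := hBd.hasFDerivAt
    have hFc : ContinuousOn (fderiv ℝ φ) U := hcdU.continuousOn_fderiv_of_isOpen hUo (by norm_num)
    have hminf : ∀ᶠ x in nhds x₀, Ψ x₀ - φ x₀ ≤ Ψ x - φ x := by
      have h1 : nhdsWithin x₀ C = nhds x₀ := nhdsWithin_eq_nhds.2 (hCo.mem_nhds hx₀)
      have h2 : ∀ᶠ x in nhdsWithin x₀ C, Ψ x₀ - φ x₀ ≤ Ψ x - φ x := hmin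
      rwa [h1] at h2
    have hev : ∀ᶠ x in nhds x₀, (Ψ x₀ - φ x₀ ≤ Ψ x - φ x) ∧ x ∈ U :=
      hminf.and (hUo.eventually_mem hx₀U)
    obtain ⟨r₀, hr₀, hball⟩ := Metric.eventually_nhds_iff.1 hev
    -- Step A: quadratic form bound for B
    have hQA : ∀ v : Euc N, B v v ≤ - ‖π v‖ ^ 2 := by
      intro v
      set g : ℝ → ℝ := fun t => φ (x₀ + t • v) + φ (x₀ + t • (-v)) with hg
      set g' : ℝ → ℝ :=
        fun t => (fderiv ℝ φ (x₀ + t • v)) v + (fderiv ℝ φ (x₀ + t • (-v))) (-v) with hg'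
      set t₁ : ℝ := r₀ / (‖v‖ + 1) with ht₁def
      have ht₁ : 0 < t₁ := by positivity
      have hmem : ∀ t : ℝ, |t| ≤ t₁ → ∀ w : Euc N, ‖w‖ ≤ ‖v‖ → dist (x₀ + t • w) x₀ < r₀ := by
        intro t ht w hw
        rw [dist_eq_norm, add_sub_cancel_left, norm_smul, Real.norm_eq_abs]
        calc |t| * ‖w‖ ≤ t₁ * ‖v‖ := mul_le_mul ht hw (norm_nonneg _) ht₁.le
          _ < r₀ := by
            rw [ht₁def, div_mul_eq_mul_div, div_lt_iff₀ (by positivity)]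
            nlinarith [norm_nonneg v]
      have hc : ∀ (w : Euc N) (t : ℝ), HasDerivAt (fun s : ℝ => x₀ + s • w) w t := by
        intro w t
        simpa using ((hasDerivAt_id t).smul_const w).const_add x₀
      have hgd : ∀ t ∈ Icc (0:ℝ) t₁, HasDerivAt g (g' t) t := by
        intro t ht
        have habs : |t| ≤ t₁ := by rw [abs_of_nonneg ht.1]; exact ht.2
        have h1 : x₀ + t • v ∈ U := (hball (hmem t habs v le_rfl)).2
        have h2 : x₀ + t • (-v) ∈ U := (hball (hmem t habs (-v) (by rw [norm_neg]))).2
        exact ((hdiff _ h1).comp_hasDerivAt t (hc v t)).add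
          ((hdiff _ h2).comp_hasDerivAt t (hc (-v) t))
      have hg'0 : HasDerivAt g' (B v v + B v v) 0 := by
        have e0v : x₀ + (0:ℝ) • v = x₀ := by simp
        have e0nv : x₀ + (0:ℝ) • (-v) = x₀ := by simp
        have hBv : HasFDerivAt (fderiv ℝ φ) B (x₀ + (0:ℝ) • v) := by rw [e0v]; exact hB
        have hBnv : HasFDerivAt (fderiv ℝ φ) B (x₀ + (0:ℝ) • (-v)) := by rw [e0nv]; exact hB
        have h1 : HasDerivAt (fun t : ℝ => fderiv ℝ φ (x₀ + t • v)) (B v) 0 :=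
          hBv.comp_hasDerivAt 0 (hc v 0)
        have h2 : HasDerivAt (fun t : ℝ => fderiv ℝ φ (x₀ + t • (-v))) (B (-v)) 0 :=
          hBnv.comp_hasDerivAt 0 (hc (-v) 0)
        have h1v : HasDerivAt (fun t : ℝ => (fderiv ℝ φ (x₀ + t • v)) v) (B v v) 0 := by
          have := h1.clm_apply (hasDerivAt_const 0 v)
          simpa using this
        have h2v : HasDerivAt (fun t : ℝ => (fderiv ℝ φ (x₀ + t • (-v))) (-v)) (B v v) 0 := by
          have := h2.clm_apply (hasDerivAt_const 0 (-v))
          simpa [map_neg, neg_neg] using this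
        exact h1v.add h2v
      have hg'00 : g' 0 = 0 := by
        simp only [hg', zero_smul, add_zero, map_neg]
        ring
      have hg'c : ContinuousOn g' (Icc 0 t₁) := by
        have hline : ∀ w : Euc N, Continuous (fun t : ℝ => x₀ + t • w) := by
          intro w; exact continuous_const.add (continuous_id.smul continuous_const)
        have hmaps : ∀ w : Euc N, ‖w‖ ≤ ‖v‖ →
            MapsTo (fun t : ℝ => x₀ + t • w) (Icc 0 t₁) U := by
          intro w hw t ht
          have habs : |t| ≤ t₁ := by rw [abs_of_nonneg ht.1]; exact ht.2
          exact (hball (hmem t habs w hw)).2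
        apply ContinuousOn.add
        · exact ((hFc.comp (hline v).continuousOn (hmaps v le_rfl)).clm_apply continuousOn_const)
        · exact ((hFc.comp (hline (-v)).continuousOn
            (hmaps (-v) (by rw [norm_neg]))).clm_apply continuousOn_const)
      have hub : ∀ t ∈ Ioo (0:ℝ) t₁, g t - g 0 ≤ (- ‖π v‖ ^ 2) * t ^ 2 + 2 * t ^ 3 := by
        intro t ht
        obtain ⟨p, hp, hval⟩ := exists_near hωb (π x₀) (ε := t ^ 3) (pow_pos ht.1 3)
        have habs : |t| ≤ t₁ := by rw [abs_of_nonneg ht.1.le]; exact ht.2.le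
        have hxp := hball (hmem t habs v le_rfl)
        have hxm := hball (hmem t habs (-v) (by rw [norm_neg]))
        have hxpC : x₀ + t • v ∈ C := hxp.2.2
        have hxmC : x₀ + t • (-v) ∈ C := hxm.2.2
        have hpipw : π (x₀ + t • v) ∈ ω := by rw [hCpre] at hxpC; exact hxpC
        have hpimw : π (x₀ + t • (-v)) ∈ ω := by rw [hCpre] at hxmC; exact hxmC
        have hπx₀ω : π x₀ ∈ ω := by rw [hCpre] at hx₀; exact hx₀
        have epip : π (x₀ + t • v) = π x₀ + t • π v := hπadd x₀ v t
        have epim : π (x₀ + t • (-v)) = π x₀ - t • π v := by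
          rw [hπadd x₀ (-v) t, hπneg, smul_neg]; abel
        have h1 : Ψ (x₀ + t • v) ≤ val p (π (x₀ + t • v)) := by
          rw [hΨ]
          exact psi_le hp (subset_closure hpipw)
        have h2 : Ψ (x₀ + t • (-v)) ≤ val p (π (x₀ + t • (-v))) := by
          rw [hΨ]
          exact psi_le hp (subset_closure hpimw)
        have h0 : val p (π x₀) - t ^ 3 < Ψ x₀ := by
          rw [hΨ]; simp only []
          linarith [hval]
        have hmp : Ψ x₀ - φ x₀ ≤ Ψ (x₀ + t • v) - φ (x₀ + t • v) := hxp.1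
        have hmm2 : Ψ x₀ - φ x₀ ≤ Ψ (x₀ + t • (-v)) - φ (x₀ + t • (-v)) := hxm.1
        have hpar : val p (π (x₀ + t • v)) + val p (π (x₀ + t • (-v)))
            = 2 * val p (π x₀) - ‖t • π v‖ ^ 2 := by
          rw [epip, epim]
          have e1 : π x₀ + t • π v - p.2 = (π x₀ - p.2) + t • π v := by abel
          have e2 : π x₀ - t • π v - p.2 = (π x₀ - p.2) - t • π v := by abel
          have ha1 : ‖(π x₀ - p.2) + t • π v‖ ^ 2
              = ‖π x₀ - p.2‖ ^ 2 + 2 * ⟪π x₀ - p.2, t • π v⟫ + ‖t • π v‖ ^ 2 :=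
            norm_add_sq_real _ _
          have ha2 : ‖(π x₀ - p.2) - t • π v‖ ^ 2
              = ‖π x₀ - p.2‖ ^ 2 - 2 * ⟪π x₀ - p.2, t • π v⟫ + ‖t • π v‖ ^ 2 :=
            norm_sub_sq_real _ _
          show (p.1 ^ 2 - ‖π x₀ + t • π v - p.2‖ ^ 2) / 2
              + (p.1 ^ 2 - ‖π x₀ - t • π v - p.2‖ ^ 2) / 2
              = 2 * ((p.1 ^ 2 - ‖π x₀ - p.2‖ ^ 2) / 2) - ‖t • π v‖ ^ 2
          rw [e1, e2]
          linarith
        have hnt : ‖t • π v‖ ^ 2 = t ^ 2 * ‖π v‖ ^ 2 := by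
          rw [norm_smul, mul_pow, Real.norm_eq_abs, sq_abs]
        have hgt : g t = φ (x₀ + t • v) + φ (x₀ + t • (-v)) := rfl
        have hg0 : g 0 = φ x₀ + φ x₀ := by simp [hg]
        rw [hgt, hg0]
        nlinarith [h1, h2, h0, hmp, hmm2, hpar, hnt]
      have hd2 := deriv2_le ht₁ hgd hg'c hg'0 hg'00 hub
      linarith
    -- Step B: matrix facts
    have hMB : ∀ i l : Fin N, hess φ x₀ i l
        = B (EuclideanSpace.single i (1:ℝ)) (EuclideanSpace.single l (1:ℝ)) := by
      intro i l
      show iteratedFDeriv ℝ 2 φ x₀ ![_, _] = _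
      rw [iteratedFDeriv_two_apply]
      simp [hB_def]
    have hsymB : ∀ w₁ w₂ : Euc N, B w₁ w₂ = B w₂ w₁ := by
      intro w₁ w₂
      exact second_derivative_symmetric_of_eventually
        (Filter.eventually_of_mem (hUo.mem_nhds hx₀U) (fun y hy => hdiff y hy)) hB w₁ w₂
    have hherm : (hess φ x₀).IsHermitian := by
      show (hess φ x₀).conjTranspose = hess φ x₀
      apply Matrix.ext
      intro i l
      rw [Matrix.conjTranspose_apply, hMB, hMB, hsymB]
      rfl
    have hlin : ∀ (z : Euc N) (L : Euc N →L[ℝ] ℝ),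
        L z = ∑ l, z l * L (EuclideanSpace.single l (1:ℝ)) := by
      intro z L
      conv_lhs => rw [euc_decomp z]
      rw [map_sum]
      apply Finset.sum_congr rfl
      intro l _
      rw [map_smul, smul_eq_mul]
    have hBexp : ∀ x y : Euc N, B x y = ∑ i, ∑ l, x i * y l *
        B (EuclideanSpace.single i (1:ℝ)) (EuclideanSpace.single l (1:ℝ)) := by
      intro x y
      have hBx : B x = ∑ i, x i • B (EuclideanSpace.single i (1:ℝ)) := by
        conv_lhs => rw [euc_decomp x]
        rw [map_sum]
        apply Finset.sum_congr rfl
        intro i _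
        rw [map_smul]
      rw [hBx, ContinuousLinearMap.sum_apply]
      apply Finset.sum_congr rfl
      intro i _
      rw [ContinuousLinearMap.smul_apply, smul_eq_mul, hlin y _, Finset.mul_sum]
      apply Finset.sum_congr rfl
      intro l _
      ring
    have hQ : ∀ u : Euc N, ∑ i, ∑ l, u i * hess φ x₀ i l * u l
        ≤ - ∑ l : Fin j, (u (Fin.castLE hj l)) ^ 2 := by
      intro u
      have h2 : ∑ i, ∑ l, u i * hess φ x₀ i l * u l = B u u := by
        rw [hBexp u u]
        apply Finset.sum_congr rfl
        intro i _
        apply Finset.sum_congr rfl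
        intro l _
        rw [hMB i l]; ring
      rw [h2]
      have h3 := hQA u
      have h4 : ‖π u‖ ^ 2 = ∑ l : Fin j, (u (Fin.castLE hj l)) ^ 2 := by
        rw [euc_norm_sq]
      linarith
    have hNk : N < k + j := by omega
    exact quad_bound hj hNk hkN _ hherm hQ
end
end

section
/- Let Ω ⊂ ℝ^N be a bounded, open, convex set and let 1 ≤ j ≤ N be an integer. Then Ω belongs to the class 𝒢_j if and only if Ω belongs to the class 𝒞_{N−j+1}. -/
noncomputable section

open Metric Set Filter Bornology
open scoped RealInnerProductSpace

/-- The Blanc–Rossi condition `𝒢_j`: for every `y ∈ ∂Ω` and `r > 0` there is `δ > 0` such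
that for every `x ∈ B_δ(y) ∩ Ω` and every `j`-dimensional subspace `S` there is a unit
vector `v ∈ S` with `{x + tv : t ∈ ℝ} ∩ B_r(y) ∩ ∂Ω ≠ ∅`. -/
def MemGclass (N j : ℕ) (Ω : Set (Euc N)) : Prop :=
  ∀ y ∈ frontier Ω, ∀ r : ℝ, 0 < r → ∃ δ : ℝ, 0 < δ ∧
    ∀ x ∈ ball y δ ∩ Ω, ∀ S : Submodule ℝ (Euc N), Module.finrank ℝ S = j →
      ∃ v ∈ S, ‖v‖ = 1 ∧ ({z : Euc N | ∃ t : ℝ, z = x + t • v} ∩ ball y r ∩ frontier Ω).Nonempty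


open Module Submodule
open scoped Topology

namespace BRAux


/-- the basic bump `((t-s)⁺)²` -/
def fb (s t : ℝ) : ℝ := (max (t - s) 0) ^ 2

lemma fb_nonneg (s t : ℝ) : 0 ≤ fb s t := sq_nonneg _

lemma fb_mono (s : ℝ) : Monotone (fb s) := by
  intro t t' h
  have h1 : max (t - s) 0 ≤ max (t' - s) 0 := max_le_max (by linarith) le_rfl
  exact pow_le_pow_left₀ (le_max_right _ _) h1 2

lemma fb_le_sq {s t : ℝ} (hs : 0 ≤ s) (ht : 0 ≤ t) : fb s t ≤ t ^ 2 := by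
  have h1 : max (t - s) 0 ≤ t := max_le (by linarith) ht
  exact pow_le_pow_left₀ (le_max_right _ _) h1 2

lemma fb_zero {s t : ℝ} (h : t ≤ s) : fb s t = 0 := by
  have : max (t - s) 0 = 0 := max_eq_right (by linarith)
  simp [fb, this]

lemma fb_strictmono {s A B : ℝ} (hsB : s < B) (hAB : A < B) : fb s A < fb s B := by
  have h1 : max (A - s) 0 < B - s := by
    rcases le_or_gt (A - s) 0 with h | h
    · rw [max_eq_right h]; linarith
    · rw [max_eq_left h.le]; linarith
  have h0 : (0:ℝ) ≤ max (A - s) 0 := le_max_right _ _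
  have : max (B - s) 0 = B - s := max_eq_left (by linarith)
  rw [fb, fb, this]
  exact pow_lt_pow_left₀ h1 h0 (by norm_num)

lemma fb_convex {s A B l : ℝ} (hl0 : 0 ≤ l) (hl1 : l ≤ 1) :
    fb s ((1 - l) * A + l * B) ≤ (1 - l) * fb s A + l * fb s B := by
  set u := max (A - s) 0 with hu
  set v := max (B - s) 0 with hv
  have hu0 : 0 ≤ u := le_max_right _ _
  have hv0 : 0 ≤ v := le_max_right _ _
  have huA : A - s ≤ u := le_max_left _ _
  have hvB : B - s ≤ v := le_max_left _ _
  have hfa : fb s A = u ^ 2 := rfl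
  have hfbb : fb s B = v ^ 2 := rfl
  have hc : max ((1 - l) * A + l * B - s) 0 ≤ (1 - l) * u + l * v := by
    apply max_le
    · nlinarith
    · exact add_nonneg (mul_nonneg (by linarith) hu0) (mul_nonneg hl0 hv0)
  have h0 : (0:ℝ) ≤ max ((1 - l) * A + l * B - s) 0 := le_max_right _ _
  have h2 := pow_le_pow_left₀ h0 hc 2
  have h3 : ((1 - l) * u + l * v) ^ 2 ≤ (1 - l) * u ^ 2 + l * v ^ 2 := by
    nlinarith [sq_nonneg (u - v), mul_nonneg hl0 (sub_nonneg.mpr hl1)]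
  rw [hfa, hfbb]
  exact le_trans h2 h3

lemma fb_strictconvex {s A B l : ℝ} (hA : 0 ≤ A) (hB : 0 ≤ B) (hAB : A ≠ B)
    (hs : s < max A B) (hl0 : 0 < l) (hl1 : l < 1) :
    fb s ((1 - l) * A + l * B) < (1 - l) * fb s A + l * fb s B := by
  set u := max (A - s) 0 with hu
  set v := max (B - s) 0 with hv
  have hu0 : 0 ≤ u := le_max_right _ _
  have hv0 : 0 ≤ v := le_max_right _ _
  have huA : A - s ≤ u := le_max_left _ _
  have hvB : B - s ≤ v := le_max_left _ _
  have huv : u ≠ v := by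
    rcases lt_or_gt_of_ne hAB with h | h
    · have hvB' : v = B - s := max_eq_left (by rw [max_eq_right h.le] at hs; linarith)
      have : u < B - s := by
        rcases le_or_gt (A - s) 0 with h' | h'
        · rw [hu, max_eq_right h']; rw [max_eq_right h.le] at hs; linarith
        · rw [hu, max_eq_left h'.le]; linarith
      rw [hvB'] at *; exact ne_of_lt this
    · have huA' : u = A - s := max_eq_left (by rw [max_eq_left h.le] at hs; linarith)
      have : v < A - s := by
        rcases le_or_gt (B - s) 0 with h' | h'
        · rw [hv, max_eq_right h']; rw [max_eq_left h.le] at hs; linarith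
        · rw [hv, max_eq_left h'.le]; linarith
      rw [huA'] at *; exact (ne_of_lt this).symm
  have hfa : fb s A = u ^ 2 := rfl
  have hfbb : fb s B = v ^ 2 := rfl
  have hc : max ((1 - l) * A + l * B - s) 0 ≤ (1 - l) * u + l * v := by
    apply max_le
    · nlinarith
    · exact add_nonneg (mul_nonneg (by linarith) hu0) (mul_nonneg hl0.le hv0)
  have h0 : (0:ℝ) ≤ max ((1 - l) * A + l * B - s) 0 := le_max_right _ _
  have h2 := pow_le_pow_left₀ h0 hc 2
  have huv' : u - v ≠ 0 := sub_ne_zero.mpr huv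
  have hl1' : (0:ℝ) < 1 - l := by linarith
  have hpos : 0 < l * (1 - l) * (u - v) ^ 2 := by positivity
  have h3 : ((1 - l) * u + l * v) ^ 2 < (1 - l) * u ^ 2 + l * v ^ 2 := by nlinarith
  rw [hfa, hfbb]
  exact lt_of_le_of_lt h2 h3

def phi (a s : ℕ → ℝ) (t : ℝ) : ℝ := ∑' k, a k * fb (s k) t

section phi
variable {a s : ℕ → ℝ} (ha : ∀ k, 0 ≤ a k) (hsum : Summable a) (hs : ∀ k, 0 < s k)
include ha hsum hs

lemma summable_phi (t : ℝ) : Summable (fun k => a k * fb (s k) t) := by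
  apply Summable.of_nonneg_of_le (fun k => mul_nonneg (ha k) (fb_nonneg _ _))
    (fun k => ?_) (hsum.mul_right ((max t 0) ^ 2))
  apply mul_le_mul_of_nonneg_left ?_ (ha k)
  have h1 : max (t - s k) 0 ≤ max t 0 := max_le_max (by linarith [hs k]) le_rfl
  exact pow_le_pow_left₀ (le_max_right _ _) h1 2

lemma phi_nonneg (t : ℝ) : 0 ≤ phi a s t :=
  tsum_nonneg fun k => mul_nonneg (ha k) (fb_nonneg _ _)

lemma phi_zero : phi a s 0 = 0 := by
  have : ∀ k, a k * fb (s k) 0 = 0 := fun k => by rw [fb_zero (hs k).le, mul_zero]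
  simp [phi, this]

lemma phi_mono : Monotone (phi a s) := fun A B h =>
  Summable.tsum_le_tsum (fun k => mul_le_mul_of_nonneg_left (fb_mono _ h) (ha k))
    (summable_phi ha hsum hs A) (summable_phi ha hsum hs B)

lemma phi_strictmono {A B : ℝ} (hAB : A < B) {k0 : ℕ} (hk0 : s k0 < B) (hak : 0 < a k0) :
    phi a s A < phi a s B := by
  refine Summable.tsum_lt_tsum_of_nonneg (i := k0) (fun k => mul_nonneg (ha k) (fb_nonneg _ _))
    (fun k => mul_le_mul_of_nonneg_left (fb_mono _ hAB.le) (ha k)) ?_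
    (summable_phi ha hsum hs B)
  exact mul_lt_mul_of_pos_left (fb_strictmono hk0 hAB) hak

lemma phi_le_sq {t : ℝ} (ht : 0 ≤ t) : phi a s t ≤ (∑' k, a k) * t ^ 2 := by
  rw [← tsum_mul_right]
  exact Summable.tsum_le_tsum (fun k => mul_le_mul_of_nonneg_left (fb_le_sq (hs k).le ht) (ha k))
    (summable_phi ha hsum hs t) (hsum.mul_right _)

lemma phi_lower (t : ℝ) : a 0 * fb (s 0) t ≤ phi a s t :=
  Summable.le_tsum (summable_phi ha hsum hs t) 0
    (fun k _ => mul_nonneg (ha k) (fb_nonneg _ _))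

lemma phi_bound {t c : ℝ} (h : ∀ k, a k * fb (s k) t ≤ c * (1/4) ^ (k+1)) :
    phi a s t ≤ c / 3 := by
  have hsg : Summable (fun k : ℕ => c * (1/4) ^ (k+1)) := by
    have : Summable (fun k : ℕ => (c/4) * (1/4:ℝ) ^ k) :=
      (summable_geometric_of_lt_one (by norm_num) (by norm_num)).mul_left _
    convert this using 2 with k
    ring
  have h1 : phi a s t ≤ ∑' k, c * (1/4) ^ (k+1) :=
    Summable.tsum_le_tsum h (summable_phi ha hsum hs t) hsg
  refine h1.trans (le_of_eq ?_)
  have : (fun k : ℕ => c * (1/4:ℝ) ^ (k+1)) = fun k : ℕ => (c/4) * (1/4:ℝ) ^ k := by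
    funext k; ring
  rw [this, tsum_mul_left, tsum_geometric_of_lt_one (by norm_num) (by norm_num)]
  ring_nf

lemma phi_convexOn : ConvexOn ℝ univ (phi a s) := by
  refine ⟨convex_univ, fun A _ B _ l m hl hm hlm => ?_⟩
  have hm1 : m = 1 - l := by linarith
  simp only [smul_eq_mul]
  have h1 : ∀ k, a k * fb (s k) (l * A + m * B) ≤
      l * (a k * fb (s k) A) + m * (a k * fb (s k) B) := by
    intro k
    have h := mul_le_mul_of_nonneg_left
      (fb_convex (s := s k) (A := A) (B := B) (l := m) hm (by linarith)) (ha k)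
    have hml : (1 - m) = l := by linarith
    rw [hml] at h
    calc a k * fb (s k) (l * A + m * B) ≤ a k * (l * fb (s k) A + m * fb (s k) B) := h
      _ = l * (a k * fb (s k) A) + m * (a k * fb (s k) B) := by ring
  have hsg : Summable (fun k => l * (a k * fb (s k) A) + m * (a k * fb (s k) B)) :=
    ((summable_phi ha hsum hs A).mul_left l).add ((summable_phi ha hsum hs B).mul_left m)
  have h2 : phi a s (l * A + m * B) ≤ ∑' k, (l * (a k * fb (s k) A) + m * (a k * fb (s k) B)) :=
    Summable.tsum_le_tsum h1 (summable_phi ha hsum hs _) hsg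
  rwa [Summable.tsum_add ((summable_phi ha hsum hs A).mul_left l) ((summable_phi ha hsum hs B).mul_left m),
    tsum_mul_left, tsum_mul_left] at h2

lemma phi_strictconvex {A B l : ℝ} (hA : 0 ≤ A) (hB : 0 ≤ B) (hAB : A ≠ B)
    (hl0 : 0 < l) (hl1 : l < 1) {k0 : ℕ} (hk0 : s k0 < max A B) (hak : 0 < a k0) :
    phi a s ((1 - l) * A + l * B) < (1 - l) * phi a s A + l * phi a s B := by
  have h1 : ∀ k, a k * fb (s k) ((1-l) * A + l * B) ≤
      (1-l) * (a k * fb (s k) A) + l * (a k * fb (s k) B) := by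
    intro k
    have := mul_le_mul_of_nonneg_left (fb_convex (s := s k) (A := A) (B := B) (l := l)
      hl0.le hl1.le) (ha k)
    calc a k * fb (s k) ((1-l) * A + l * B)
        ≤ a k * ((1-l) * fb (s k) A + l * fb (s k) B) := this
      _ = (1-l) * (a k * fb (s k) A) + l * (a k * fb (s k) B) := by ring
  have hstrict : a k0 * fb (s k0) ((1-l) * A + l * B) <
      (1-l) * (a k0 * fb (s k0) A) + l * (a k0 * fb (s k0) B) := by
    have := mul_lt_mul_of_pos_left (fb_strictconvex hA hB hAB hk0 hl0 hl1) hak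
    calc a k0 * fb (s k0) ((1-l) * A + l * B)
        < a k0 * ((1-l) * fb (s k0) A + l * fb (s k0) B) := this
      _ = (1-l) * (a k0 * fb (s k0) A) + l * (a k0 * fb (s k0) B) := by ring
  have hsg : Summable (fun k => (1-l) * (a k * fb (s k) A) + l * (a k * fb (s k) B)) :=
    ((summable_phi ha hsum hs A).mul_left (1-l)).add ((summable_phi ha hsum hs B).mul_left l)
  have h2 := Summable.tsum_lt_tsum_of_nonneg
    (fun k => mul_nonneg (ha k) (fb_nonneg _ _)) h1 hstrict hsg
  rwa [Summable.tsum_add ((summable_phi ha hsum hs A).mul_left _) ((summable_phi ha hsum hs B).mul_left l),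
    tsum_mul_left, tsum_mul_left] at h2

lemma phi_continuous : Continuous (phi a s) := by
  rw [← continuousOn_univ]
  exact (phi_convexOn ha hsum hs).continuousOn isOpen_univ

end phi


/-- Exit time of a ray from a bounded open set. -/
lemma exists_exit {N : ℕ} {Ω : Set (Euc N)} (hΩo : IsOpen Ω) (hΩb : IsBounded Ω)
    {x : Euc N} (hx : x ∈ Ω) {v : Euc N} (hv : ‖v‖ = 1) :
    ∃ T : ℝ, 0 < T ∧ x + T • v ∈ frontier Ω := by
  obtain ⟨R, hR⟩ := (isBounded_iff_subset_ball 0).mp hΩb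
  set B : Set ℝ := {t : ℝ | 0 ≤ t ∧ x + t • v ∈ Ω} with hB
  have h0B : (0:ℝ) ∈ B := ⟨le_rfl, by simpa using hx⟩
  have hBne : B.Nonempty := ⟨0, h0B⟩
  have hbdd : BddAbove B := by
    refine ⟨R + ‖x‖, fun t ht => ?_⟩
    have h1 : ‖x + t • v‖ < R := by simpa using hR ht.2
    have h2 : t = ‖t • v‖ := by rw [norm_smul, hv, mul_one, Real.norm_of_nonneg ht.1]
    calc t = ‖(x + t • v) - x‖ := by rw [add_sub_cancel_left]; exact h2
      _ ≤ ‖x + t • v‖ + ‖x‖ := norm_sub_le _ _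
      _ ≤ R + ‖x‖ := by linarith
  set T := sSup B with hT
  obtain ⟨ε, hε, hball⟩ := Metric.isOpen_iff.mp hΩo x hx
  have hTpos : 0 < T := by
    have : min (ε/2) 1 ∈ B := by
      constructor
      · positivity
      · apply hball
        rw [mem_ball, dist_eq_norm, add_sub_cancel_left, norm_smul, hv, mul_one,
          Real.norm_of_nonneg (by positivity)]
        exact lt_of_le_of_lt (min_le_left _ _) (by linarith)
    have := le_csSup hbdd this
    have h2 : 0 < min (ε/2) 1 := by positivity
    linarith
  refine ⟨T, hTpos, ?_, ?_⟩
  · -- x + T • v ∈ closure Ω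
    rw [Metric.mem_closure_iff]
    intro ρ hρ
    obtain ⟨t, htB, htlt⟩ := exists_lt_of_lt_csSup hBne (show T - min (ρ/2) T < T by
      have : 0 < min (ρ/2) T := lt_min (by linarith) hTpos
      linarith)
    refine ⟨x + t • v, htB.2, ?_⟩
    have htle : t ≤ T := le_csSup hbdd htB
    rw [dist_eq_norm]
    have : x + T • v - (x + t • v) = (T - t) • v := by
      rw [add_sub_add_left_eq_sub, ← sub_smul]
    rw [this, norm_smul, hv, mul_one, Real.norm_of_nonneg (by linarith)]
    have h3 : 0 < min (ρ/2) T := lt_min (by linarith) hTpos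
    have h4 : min (ρ/2) T ≤ ρ/2 := min_le_left _ _
    linarith
  · -- x + T • v ∉ interior Ω = Ω
    rw [hΩo.interior_eq]
    intro hmem
    obtain ⟨ε', hε', hball'⟩ := Metric.isOpen_iff.mp hΩo _ hmem
    have : T + ε'/2 ∈ B := by
      constructor
      · linarith
      · apply hball'
        rw [mem_ball, dist_eq_norm]
        have : x + (T + ε'/2) • v - (x + T • v) = (ε'/2) • v := by
          rw [add_sub_add_left_eq_sub, ← sub_smul]; ring_nf
        rw [this, norm_smul, hv, mul_one, Real.norm_of_nonneg (by linarith)]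
        linarith
    have := le_csSup hbdd this
    linarith

/-- Chords of a strictly convex set passing near a boundary point have an endpoint nearby. -/
lemma chord {m : ℕ} {ω : Set (Euc m)} (hb : IsBounded ω)
    (hsc : StrictlyConvexSet ω) {p : Euc m} (hp : p ∈ closure ω) (hpn : p ∉ ω)
    {ρ : ℝ} (hρ : 0 < ρ) :
    ∃ δ > 0, ∀ a ∈ closure ω, ∀ b ∈ closure ω, ∀ lam : ℝ, 0 ≤ lam → lam ≤ 1 →
      ‖(1 - lam) • a + lam • b - p‖ < δ → ρ ≤ ‖a - p‖ → ρ ≤ ‖b - p‖ → False := by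
  by_contra hcon
  push_neg at hcon
  have key : ∀ k : ℕ, ∃ a ∈ closure ω, ∃ b ∈ closure ω, ∃ lam : ℝ, 0 ≤ lam ∧ lam ≤ 1 ∧
      ‖(1 - lam) • a + lam • b - p‖ < 1/(k+1) ∧ ρ ≤ ‖a - p‖ ∧ ρ ≤ ‖b - p‖ := by
    intro k
    obtain ⟨a, ha, b, hb', lam, h1, h2, h3, h4, h5⟩ := hcon (1/(k+1)) (by positivity)
    exact ⟨a, ha, b, hb', lam, h1, h2, h3, h4, h5.1⟩
  choose A hA Bb hBb lam hlam0 hlam1 hnear hAp hBp using key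
  have hcomp : IsCompact (closure ω) := hb.isCompact_closure
  obtain ⟨astar, hastar, φ1, hφ1, hA1⟩ := hcomp.tendsto_subseq hA
  obtain ⟨bstar, hbstar, φ2, hφ2, hB1⟩ := hcomp.tendsto_subseq (fun k => hBb (φ1 k))
  obtain ⟨lstar, hlstar, φ3, hφ3, hL1⟩ := (isCompact_Icc (a := (0:ℝ)) (b := 1)).tendsto_subseq
    (x := fun k => lam (φ1 (φ2 k))) (fun k => ⟨hlam0 _, hlam1 _⟩)
  set ψ : ℕ → ℕ := fun k => φ1 (φ2 (φ3 k)) with hψ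
  have hψmono : StrictMono ψ := hφ1.comp (hφ2.comp hφ3)
  have hAlim : Tendsto (fun k => A (ψ k)) atTop (𝓝 astar) :=
    hA1.comp ((hφ2.comp hφ3).tendsto_atTop)
  have hBlim : Tendsto (fun k => Bb (ψ k)) atTop (𝓝 bstar) :=
    hB1.comp (hφ3.tendsto_atTop)
  have hLlim : Tendsto (fun k => lam (ψ k)) atTop (𝓝 lstar) := hL1
  have hcombo : Tendsto (fun k => (1 - lam (ψ k)) • A (ψ k) + lam (ψ k) • Bb (ψ k))
      atTop (𝓝 ((1 - lstar) • astar + lstar • bstar)) :=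
    (((tendsto_const_nhds.sub hLlim).smul hAlim).add (hLlim.smul hBlim))
  have hnorm0 : Tendsto (fun k => ‖(1 - lam (ψ k)) • A (ψ k) + lam (ψ k) • Bb (ψ k) - p‖)
      atTop (𝓝 0) := by
    apply squeeze_zero (fun k => norm_nonneg _) (fun k => (hnear (ψ k)).le)
    have h1 : Tendsto (fun n : ℕ => 1/((n:ℝ)+1)) atTop (𝓝 0) :=
      tendsto_one_div_add_atTop_nhds_zero_nat
    exact h1.comp hψmono.tendsto_atTop
  have hnormlim : Tendsto (fun k => ‖(1 - lam (ψ k)) • A (ψ k) + lam (ψ k) • Bb (ψ k) - p‖)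
      atTop (𝓝 ‖(1 - lstar) • astar + lstar • bstar - p‖) :=
    (hcombo.sub tendsto_const_nhds).norm
  have hpe : (1 - lstar) • astar + lstar • bstar = p := by
    have h1 := tendsto_nhds_unique hnormlim hnorm0
    exact sub_eq_zero.mp (norm_eq_zero.mp h1)
  have hap : ρ ≤ ‖astar - p‖ :=
    ge_of_tendsto (hAlim.sub tendsto_const_nhds).norm
      (Eventually.of_forall (fun k => hAp (ψ k)))
  have hbp : ρ ≤ ‖bstar - p‖ :=
    ge_of_tendsto (hBlim.sub tendsto_const_nhds).norm
      (Eventually.of_forall (fun k => hBp (ψ k)))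
  have hne : astar ≠ bstar := by
    intro h
    rw [h] at hpe
    rw [← add_smul] at hpe
    simp at hpe
    rw [hpe] at hbp
    simp at hbp
    linarith
  have hl0 : lstar ≠ 0 := by
    intro h
    rw [h] at hpe
    simp at hpe
    rw [hpe] at hap
    simp at hap
    linarith
  have hl1 : lstar ≠ 1 := by
    intro h
    rw [h] at hpe
    simp at hpe
    rw [hpe] at hbp
    simp at hbp
    linarith
  have := hsc astar hastar bstar hbstar hne lstar
    (lt_of_le_of_ne hlstar.1 (Ne.symm hl0)) (lt_of_le_of_ne hlstar.2 hl1)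
  rw [hpe] at this
  exact hpn this



lemma exists_finrank_between {E : Type*} [AddCommGroup E] [Module ℝ E] [FiniteDimensional ℝ E]
    {A B : Submodule ℝ E} (hAB : A ≤ B) {k : ℕ} (h1 : finrank ℝ A ≤ k) (h2 : k ≤ finrank ℝ B) :
    ∃ C : Submodule ℝ E, A ≤ C ∧ C ≤ B ∧ finrank ℝ C = k := by
  induction k with
  | zero => exact ⟨A, le_rfl, hAB, by omega⟩
  | succ k ih =>
    by_cases hA : finrank ℝ A = k + 1
    · exact ⟨A, le_rfl, hAB, hA⟩
    obtain ⟨C', hAC', hC'B, hC'⟩ := ih (by omega) (by omega)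
    have hlt : C' < B := lt_of_le_of_ne hC'B (by rintro rfl; omega)
    obtain ⟨v, hvB, hvC'⟩ := SetLike.exists_of_lt hlt
    have hv0 : v ≠ 0 := fun h => hvC' (h ▸ C'.zero_mem)
    refine ⟨C' ⊔ ℝ ∙ v, le_trans hAC' le_sup_left, sup_le hC'B ((span_singleton_le_iff_mem v B).mpr hvB), ?_⟩
    have hinf : C' ⊓ (ℝ ∙ v) = ⊥ := by
      rw [eq_bot_iff]
      rintro x ⟨hx1, hx2⟩
      obtain ⟨c, rfl⟩ := mem_span_singleton.mp hx2
      rcases eq_or_ne c 0 with rfl | hc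
      · simp
      · have hv' : v ∈ C' := by
          have := C'.smul_mem c⁻¹ hx1
          rwa [smul_smul, inv_mul_cancel₀ hc, one_smul] at this
        exact (hvC' hv').elim
    have := Submodule.finrank_sup_add_finrank_inf_eq C' (ℝ ∙ v)
    rw [hinf, finrank_bot, finrank_span_singleton hv0, hC'] at this
    omega

lemma exists_ne_zero_of_finrank_pos {E : Type*} [NormedAddCommGroup E] [NormedSpace ℝ E] [FiniteDimensional ℝ E]
    {P : Submodule ℝ E} (h : 0 < finrank ℝ P) : ∃ v ∈ P, v ≠ 0 := by
  haveI : Nontrivial P := Module.finrank_pos_iff.mp h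
  obtain ⟨x, hx⟩ := exists_ne (0 : P)
  exact ⟨x, x.2, fun h' => hx (Subtype.ext h')⟩

section trunc
variable {N j' : ℕ} (hj : j' ≤ N)

/-- truncation to the first `j'` coordinates. -/
def truncF (u : Euc N) : Euc j' := WithLp.toLp 2 (fun i => u (Fin.castLE hj i))

lemma truncF_sumsq (u : Euc N) :
    ∑ i : Fin j', ‖truncF hj u i‖ ^ 2 =
      ∑ i ∈ Finset.univ.map (Fin.castLEEmb hj), ‖u i‖ ^ 2 := by
  rw [Finset.sum_map]
  rfl

lemma norm_truncF_le (u : Euc N) : ‖truncF hj u‖ ≤ ‖u‖ := by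
  rw [EuclideanSpace.norm_eq, EuclideanSpace.norm_eq]
  apply Real.sqrt_le_sqrt
  rw [truncF_sumsq]
  exact Finset.sum_le_univ_sum_of_nonneg (fun i => by positivity)

/-- vectors supported in the first `j'` coordinates -/
def lastZero : Submodule ℝ (Euc N) where
  carrier := {w : Euc N | ∀ i : Fin N, j' ≤ (i : ℕ) → w i = 0}
  add_mem' := by
    intro a b ha hb
    intro i hi
    have : (a + b) i = a i + b i := rfl
    rw [this, ha i hi, hb i hi, add_zero]
  zero_mem' := fun i _ => rfl
  smul_mem' := by
    intro c a ha i hi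
    have : (c • a) i = c * a i := rfl
    rw [this, ha i hi, mul_zero]

lemma norm_truncF_eq {u : Euc N} (hu : u ∈ lastZero (N := N) (j' := j')) :
    ‖truncF hj u‖ = ‖u‖ := by
  rw [EuclideanSpace.norm_eq, EuclideanSpace.norm_eq, truncF_sumsq]
  congr 1
  apply Finset.sum_subset (Finset.subset_univ _)
  intro i _ hnot
  have : j' ≤ (i : ℕ) := by
    by_contra hlt
    push_neg at hlt
    exact hnot (Finset.mem_map.mpr ⟨⟨(i : ℕ), hlt⟩, Finset.mem_univ _, Fin.ext rfl⟩)
  rw [hu i this]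
  simp

/-- The span of the first `j'` coordinate vectors. -/
def firstCoords : Submodule ℝ (Euc N) :=
  Submodule.span ℝ (Set.range (fun i : Fin j' =>
    (EuclideanSpace.single (Fin.castLE hj i) (1:ℝ) : Euc N)))

lemma firstCoords_le_lastZero : firstCoords hj ≤ lastZero (N := N) (j' := j') := by
  rw [firstCoords, Submodule.span_le]
  rintro w ⟨i', rfl⟩ i hi
  have hne : i ≠ Fin.castLE hj i' := by
    intro h
    have : (i : ℕ) = (i' : ℕ) := by rw [h]; rfl
    have := i'.2
    omega
  simp [EuclideanSpace.single_apply, hne]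

lemma finrank_firstCoords : finrank ℝ (firstCoords (N := N) hj) = j' := by
  have hli : LinearIndependent ℝ (fun i : Fin j' =>
      (EuclideanSpace.single (Fin.castLE hj i) (1:ℝ) : Euc N)) := by
    have h1 : Orthonormal ℝ (fun i : Fin N => (EuclideanSpace.single i (1:ℝ) : Euc N)) := by
      have := (EuclideanSpace.basisFun (Fin N) ℝ).orthonormal
      exact EuclideanSpace.orthonormal_single
    exact (h1.comp _ (Fin.castLE_injective hj)).linearIndependent
  rw [firstCoords, finrank_span_eq_card hli, Fintype.card_fin]

end trunc

end BRAux
namespace BRAux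

/-- the truncation as a linear map -/
def truncL {N j' : ℕ} (hj : j' ≤ N) : Euc N →ₗ[ℝ] Euc j' where
  toFun := truncF hj
  map_add' := fun _ _ => rfl
  map_smul' := fun _ _ => rfl

lemma truncL_apply {N j' : ℕ} (hj : j' ≤ N) (u : Euc N) : truncL hj u = truncF hj u := rfl

set_option maxHeartbeats 1000000 in
lemma dirA {N j : ℕ} (hj1 : 1 ≤ j) (hjN : j ≤ N) {Ω : Set (Euc N)}
    (hΩo : IsOpen Ω) (hΩb : IsBounded Ω) :
    MemCclass N (N - j + 1) Ω → MemGclass N j Ω := by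
  intro hC y hy r hr
  obtain ⟨O, C, ⟨hjle, ω, hωo, hωb, hωne, hωsc, hCeq⟩, hsub, hfr⟩ := hC y hy
  set ℓ : Euc N → Euc (N - j + 1) := fun z => truncL hjle (O.symm z) with hℓ
  have hℓcont : Continuous ℓ := ((truncL hjle).continuous_of_finiteDimensional).comp
    O.symm.continuous
  have hℓlip : ∀ a b : Euc N, ‖ℓ a - ℓ b‖ ≤ ‖a - b‖ := by
    intro a b
    have h1 : ℓ a - ℓ b = truncL hjle (O.symm a - O.symm b) := by
      rw [map_sub]
    rw [h1]
    rw [truncL_apply]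
    calc ‖truncF hjle (O.symm a - O.symm b)‖ ≤ ‖O.symm a - O.symm b‖ :=
          norm_truncF_le hjle _
      _ = ‖O.symm (a - b)‖ := by rw [map_sub]
      _ = ‖a - b‖ := O.symm.norm_map _
  have hOC : (⇑O) '' C = {z : Euc N | ℓ z ∈ ω} := by
    ext z
    constructor
    · rintro ⟨c, hc, rfl⟩
      rw [hCeq] at hc
      have : O.symm (O c) = c := O.symm_apply_apply c
      show truncL hjle (O.symm (O c)) ∈ ω
      rw [this]
      exact hc
    · intro hz
      refine ⟨O.symm z, ?_, O.apply_symm_apply z⟩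
      rw [hCeq]
      exact hz
  rw [hOC] at hsub hfr
  have hUopen : IsOpen {z : Euc N | ℓ z ∈ ω} := hωo.preimage hℓcont
  rw [hUopen.frontier_eq] at hfr
  obtain ⟨hycl, hynot⟩ := hfr
  have hpcl : ℓ y ∈ closure ω := by
    have h1 : closure {z : Euc N | ℓ z ∈ ω} ⊆ ℓ ⁻¹' (closure ω) :=
      hℓcont.closure_preimage_subset ω
    exact h1 hycl
  have hpnot : ℓ y ∉ ω := hynot
  obtain ⟨δA, hδA, hchord⟩ := chord hωb hωsc hpcl hpnot (show (0:ℝ) < r/4 by linarith)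
  refine ⟨min δA (r/4), lt_min hδA (by linarith), ?_⟩
  rintro x ⟨hxball, hxΩ⟩ S hS
  -- find the unit vector v
  have hmap : Submodule.map ((O.toLinearEquiv : Euc N ≃ₗ[ℝ] Euc N) : Euc N →ₗ[ℝ] Euc N) (firstCoords hjle) ≤ ⊤ :=
    le_top
  set V' := Submodule.map ((O.toLinearEquiv : Euc N ≃ₗ[ℝ] Euc N) : Euc N →ₗ[ℝ] Euc N)
    (firstCoords hjle) with hV'
  have hV'rank : finrank ℝ V' = N - j + 1 := by
    rw [hV', LinearEquiv.finrank_map_eq, finrank_firstCoords]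
  have hinfpos : 0 < finrank ℝ (S ⊓ V' : Submodule ℝ (Euc N)) := by
    have h1 := Submodule.finrank_sup_add_finrank_inf_eq S V'
    have h2 : finrank ℝ (S ⊔ V' : Submodule ℝ (Euc N)) ≤ N := by
      have := Submodule.finrank_le (S ⊔ V' : Submodule ℝ (Euc N))
      rwa [finrank_euclideanSpace_fin] at this
    rw [hS, hV'rank] at h1
    omega
  obtain ⟨v₀, hv₀, hv₀ne⟩ := exists_ne_zero_of_finrank_pos hinfpos
  set v := ‖v₀‖⁻¹ • v₀ with hv
  have hv₀norm : ‖v₀‖ ≠ 0 := norm_ne_zero_iff.mpr hv₀ne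
  have hv1 : ‖v‖ = 1 := by
    rw [hv, norm_smul, norm_inv, norm_norm, inv_mul_cancel₀ hv₀norm]
  have hvS : v ∈ S := S.smul_mem _ (Submodule.mem_inf.mp hv₀).1
  have hvV' : v ∈ V' := V'.smul_mem _ (Submodule.mem_inf.mp hv₀).2
  have hℓv : ‖ℓ v‖ = 1 := by
    obtain ⟨w, hw, hwv⟩ := hvV'
    have hsymm : O.symm v = w := by
      rw [← hwv]
      exact O.symm_apply_apply w
    have : ℓ v = truncF hjle w := by rw [hℓ]; simp only [hsymm]; rw [truncL_apply]
    rw [this, norm_truncF_eq hjle (firstCoords_le_lastZero hjle hw), ← hsymm,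
      O.symm.norm_map, hv1]
  -- exit times
  obtain ⟨T1, hT1pos, hT1fr⟩ := exists_exit hΩo hΩb hxΩ hv1
  have hvneg1 : ‖-v‖ = 1 := by rw [norm_neg, hv1]
  obtain ⟨T2, hT2pos, hT2fr⟩ := exists_exit hΩo hΩb hxΩ hvneg1
  have hxy : ‖x - y‖ < min δA (r/4) := by
    rw [mem_ball, dist_eq_norm] at hxball
    exact hxball
  rcases le_or_gt T1 (r/2) with hT1le | hT1gt
  · refine ⟨v, hvS, hv1, ⟨x + T1 • v, ⟨⟨T1, rfl⟩, ?_⟩, hT1fr⟩⟩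
    rw [mem_ball, dist_eq_norm]
    have : x + T1 • v - y = (x - y) + T1 • v := by abel
    rw [this]
    calc ‖(x - y) + T1 • v‖ ≤ ‖x - y‖ + ‖T1 • v‖ := norm_add_le _ _
      _ = ‖x - y‖ + T1 := by
          rw [norm_smul, hv1, mul_one, Real.norm_of_nonneg hT1pos.le]
      _ < r/4 + r/2 := by
          have := lt_of_lt_of_le hxy (min_le_right _ _)
          linarith
      _ < r := by linarith
  rcases le_or_gt T2 (r/2) with hT2le | hT2gt
  · refine ⟨v, hvS, hv1, ⟨x + T2 • (-v), ⟨⟨-T2, by rw [neg_smul, smul_neg]⟩, ?_⟩, hT2fr⟩⟩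
    rw [mem_ball, dist_eq_norm]
    have : x + T2 • (-v) - y = (x - y) + T2 • (-v) := by abel
    rw [this]
    calc ‖(x - y) + T2 • (-v)‖ ≤ ‖x - y‖ + ‖T2 • (-v)‖ := norm_add_le _ _
      _ = ‖x - y‖ + T2 := by
          rw [norm_smul, hvneg1, mul_one, Real.norm_of_nonneg hT2pos.le]
      _ < r/4 + r/2 := by
          have := lt_of_lt_of_le hxy (min_le_right _ _)
          linarith
      _ < r := by linarith
  -- contradiction branch
  exfalso
  have hclsub : frontier Ω ⊆ ℓ ⁻¹' (closure ω) := by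
    intro z hz
    have h1 : z ∈ closure {z : Euc N | ℓ z ∈ ω} := closure_mono hsub hz.1
    exact hℓcont.closure_preimage_subset ω h1
  set a := ℓ (x + T2 • (-v)) with ha
  set b := ℓ (x + T1 • v) with hb2
  have haω : a ∈ closure ω := hclsub hT2fr
  have hbω : b ∈ closure ω := hclsub hT1fr
  set lam := T2 / (T1 + T2) with hlam
  have hT12 : 0 < T1 + T2 := by linarith
  have hlam0 : 0 ≤ lam := by positivity
  have hlam1 : lam ≤ 1 := by
    rw [hlam, div_le_one hT12]
    linarith
  have hℓlin : ∀ (t : ℝ) (w : Euc N), ℓ (x + t • w) = ℓ x + t • ℓ w := by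
    intro t w
    rw [hℓ]
    simp only [map_add, map_smul]
  have hcombo : (1 - lam) • a + lam • b = ℓ x := by
    rw [ha, hb2, hℓlin, hℓlin]
    have h1 : ℓ (-v) = -ℓ v := by rw [hℓ]; simp only [map_neg]
    rw [h1]
    have h2 : T2 • (-ℓ v) = (-T2) • ℓ v := by rw [smul_neg, neg_smul]
    rw [h2]
    have : (1 - lam) • (ℓ x + (-T2) • ℓ v) + lam • (ℓ x + T1 • ℓ v)
        = ℓ x + ((1 - lam) * (-T2) + lam * T1) • ℓ v := by
      rw [smul_add, smul_add, smul_smul, smul_smul]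
      rw [show ((1:ℝ) - lam) • ℓ x + ((1 - lam) * (-T2)) • ℓ v + (lam • ℓ x + (lam * T1) • ℓ v)
        = ((1 - lam) + lam) • ℓ x + ((1 - lam) * (-T2) + lam * T1) • ℓ v by
          rw [add_smul, add_smul]; abel]
      norm_num
    rw [this]
    have hz : (1 - lam) * (-T2) + lam * T1 = 0 := by
      rw [hlam]
      field_simp
      ring
    rw [hz, zero_smul, add_zero]
  apply hchord a haω b hbω lam hlam0 hlam1
  · rw [hcombo]
    calc ‖ℓ x - ℓ y‖ ≤ ‖x - y‖ := hℓlip x y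
      _ < min δA (r/4) := hxy
      _ ≤ δA := min_le_left _ _
  · -- r/4 ≤ ‖a - ℓ y‖
    have h1 : ‖a - ℓ x‖ = T2 := by
      rw [ha, hℓlin, add_sub_cancel_left, norm_smul]
      have hn : ℓ (-v) = -ℓ v := by rw [hℓ]; simp only [map_neg]
      rw [hn, norm_neg, hℓv, mul_one, Real.norm_of_nonneg hT2pos.le]
    have h2 : ‖ℓ x - ℓ y‖ < r/4 := lt_of_le_of_lt (hℓlip x y)
      (lt_of_lt_of_le hxy (min_le_right _ _))
    have h3 : ‖a - ℓ x‖ ≤ ‖a - ℓ y‖ + ‖ℓ x - ℓ y‖ := by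
      have := norm_sub_le_norm_sub_add_norm_sub a (ℓ y) (ℓ x)
      rwa [norm_sub_rev (ℓ y) (ℓ x)] at this
    rw [h1] at h3
    linarith
  · have h1 : ‖b - ℓ x‖ = T1 := by
      rw [hb2, hℓlin, add_sub_cancel_left, norm_smul, hℓv, mul_one,
        Real.norm_of_nonneg hT1pos.le]
    have h2 : ‖ℓ x - ℓ y‖ < r/4 := lt_of_le_of_lt (hℓlip x y)
      (lt_of_lt_of_le hxy (min_le_right _ _))
    have h3 : ‖b - ℓ x‖ ≤ ‖b - ℓ y‖ + ‖ℓ x - ℓ y‖ := by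
      have := norm_sub_le_norm_sub_add_norm_sub b (ℓ y) (ℓ x)
      rwa [norm_sub_rev (ℓ y) (ℓ x)] at this
    rw [h1] at h3
    linarith

end BRAux
namespace BRAux

lemma exists_normal {N : ℕ} {Ω : Set (Euc N)} (hΩo : IsOpen Ω) (hΩc : Convex ℝ Ω)
    (hΩne : Ω.Nonempty) {x : Euc N} (hx : x ∈ frontier Ω) :
    ∃ n : Euc N, ‖n‖ = 1 ∧ ∀ z ∈ Ω, ⟪z - x, n⟫ < 0 := by
  have hxnot : x ∉ Ω := by
    rw [hΩo.frontier_eq] at hx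
    exact hx.2
  obtain ⟨f, hf⟩ := geometric_hahn_banach_open_point hΩc hΩo hxnot
  set n₀ := (InnerProductSpace.toDual ℝ (Euc N)).symm f with hn₀
  have hn₀app : ∀ z : Euc N, ⟪n₀, z⟫ = f z := fun z =>
    InnerProductSpace.toDual_symm_apply
  obtain ⟨a, ha⟩ := hΩne
  have hn₀ne : n₀ ≠ 0 := by
    intro h
    have h1 := hn₀app a
    have h2 := hn₀app x
    rw [h] at h1 h2
    simp only [inner_zero_left] at h1 h2
    have := hf a ha
    rw [← h1, ← h2] at this
    exact lt_irrefl _ this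
  have hn₀pos : 0 < ‖n₀‖ := norm_pos_iff.mpr hn₀ne
  refine ⟨‖n₀‖⁻¹ • n₀, ?_, ?_⟩
  · rw [norm_smul, norm_inv, norm_norm, inv_mul_cancel₀ (ne_of_gt hn₀pos)]
  · intro z hz
    have h1 : ⟪z - x, ‖n₀‖⁻¹ • n₀⟫ = ‖n₀‖⁻¹ * (f z - f x) := by
      rw [real_inner_smul_right, real_inner_comm, hn₀app, map_sub]
    rw [h1]
    have h2 : f z - f x < 0 := sub_neg.mpr (hf z hz)
    exact mul_neg_of_pos_of_neg (by positivity) h2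

set_option maxHeartbeats 1000000 in
lemma face_small {N j : ℕ} (hj1 : 1 ≤ j) (hjN : j ≤ N) {Ω : Set (Euc N)}
    (hΩo : IsOpen Ω) (hΩb : IsBounded Ω) (hΩne : Ω.Nonempty) (hΩc : Convex ℝ Ω)
    (hG : MemGclass N j Ω) {x : Euc N} (hx : x ∈ frontier Ω) {n : Euc N}
    (hsupp : ∀ z ∈ Ω, ⟪z - x, n⟫ < 0) :
    finrank ℝ (vectorSpan ℝ {z : Euc N | z ∈ closure Ω ∧ ⟪z - x, n⟫ = 0}) ≤ j - 1 := by
  set F : Set (Euc N) := {z : Euc N | z ∈ closure Ω ∧ ⟪z - x, n⟫ = 0} with hF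
  by_contra hcon
  push_neg at hcon
  have hdim : j ≤ finrank ℝ (vectorSpan ℝ F) := by omega
  -- basic facts about F
  have hFconv : Convex ℝ F := by
    intro z1 hz1 z2 hz2 a b ha hb hab
    refine ⟨hΩc.closure hz1.1 hz2.1 ha hb hab, ?_⟩
    have h1 : a • z1 + b • z2 - x = a • (z1 - x) + b • (z2 - x) := by
      rw [smul_sub, smul_sub]
      rw [show a • z1 - a • x + (b • z2 - b • x) = a • z1 + b • z2 - (a • x + b • x) by abel,
        ← add_smul, hab, one_smul]
    rw [h1, inner_add_left, real_inner_smul_left, real_inner_smul_left, hz1.2, hz2.2]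
    ring
  have hFne : F.Nonempty := ⟨x, frontier_subset_closure hx, by simp⟩
  have hFfr : F ⊆ frontier Ω := by
    intro z hz
    rw [hΩo.frontier_eq]
    refine ⟨hz.1, fun hzΩ => ?_⟩
    exact absurd hz.2 (ne_of_lt (hsupp z hzΩ))
  -- an intrinsic interior point
  obtain ⟨y, hyint⟩ := Set.Nonempty.intrinsicInterior hFconv hFne
  have hyF : y ∈ F := intrinsicInterior_subset hyint
  obtain ⟨y', hy'int, hy'eq⟩ := mem_intrinsicInterior.mp hyint
  obtain ⟨ε, hε, hball⟩ := Metric.isOpen_iff.mp isOpen_interior y' hy'int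
  have hballF : ∀ w : Euc N, w ∈ (affineSpan ℝ F).direction → ‖w‖ < ε → y + w ∈ F := by
    intro w hw hwn
    have hyaff : y ∈ affineSpan ℝ F := subset_affineSpan ℝ F hyF
    have hzaff : w +ᵥ y ∈ affineSpan ℝ F :=
      AffineSubspace.vadd_mem_of_mem_direction hw hyaff
    have hmem : (⟨w +ᵥ y, hzaff⟩ : affineSpan ℝ F) ∈ ball y' ε := by
      rw [mem_ball, Subtype.dist_eq, dist_eq_norm]
      have : ((⟨w +ᵥ y, hzaff⟩ : affineSpan ℝ F) : Euc N) = w + y := rfl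
      rw [this, hy'eq]
      simpa using hwn
    have h2 := interior_subset (hball hmem)
    have h4 : w +ᵥ y ∈ F := h2
    rwa [vadd_eq_add, add_comm] at h4
  have hyfr : y ∈ frontier Ω := hFfr hyF
  -- a j-dimensional subspace of directions
  obtain ⟨S, -, hSle, hSrank⟩ := exists_finrank_between (bot_le (a := vectorSpan ℝ F))
    (by rw [finrank_bot]; omega) hdim
  -- interior point
  obtain ⟨z₀, hz₀⟩ := hΩne
  have hyne : y ≠ z₀ := fun h => (hΩo.frontier_eq ▸ hyfr).2 (h ▸ hz₀)
  set d := ‖z₀ - y‖ with hd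
  have hdpos : 0 < d := by
    rw [hd, norm_pos_iff, sub_ne_zero]
    exact fun h => hyne h.symm
  -- apply the G property at y with radius ε/8
  obtain ⟨δ, hδ, hGδ⟩ := hG y hyfr (ε/8) (by linarith)
  set m := min δ (ε/8) with hm
  have hmpos : 0 < m := lt_min hδ (by linarith)
  set s := min (1/2 : ℝ) (m / (2*d)) with hs
  have hspos : 0 < s := lt_min (by norm_num) (by positivity)
  have hs12 : s ≤ 1/2 := min_le_left _ _
  have hsd : s * d < m := by
    have h1 : s ≤ m / (2*d) := min_le_right _ _
    have h2 : s * d ≤ (m / (2*d)) * d := by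
      apply mul_le_mul_of_nonneg_right h1 hdpos.le
    have h3 : (m / (2*d)) * d = m / 2 := by field_simp
    rw [h3] at h2
    linarith
  set x' := s • z₀ + (1 - s) • y with hx'
  have hx'Ω : x' ∈ Ω := by
    have := hΩc.combo_interior_closure_mem_interior (a := s) (b := 1 - s)
      (by rw [hΩo.interior_eq]; exact hz₀) (frontier_subset_closure hyfr)
      hspos (by linarith) (by ring)
    rwa [hΩo.interior_eq] at this
  have hx'y : ‖x' - y‖ = s * d := by
    have h1 : x' - y = s • (z₀ - y) := by
      rw [hx']
      module
    rw [h1, norm_smul, Real.norm_of_nonneg hspos.le]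
  have hx'ball : x' ∈ ball y δ := by
    rw [mem_ball, dist_eq_norm, hx'y]
    calc s * d < m := hsd
      _ ≤ δ := min_le_left _ _
  obtain ⟨v, hvS, hv1, z, ⟨⟨⟨t, hzt⟩, hzball⟩, hzfr⟩⟩ :=
    hGδ x' ⟨hx'ball, hx'Ω⟩ S hSrank
  -- bound |t|
  have hzy : ‖z - y‖ < ε/8 := by
    rw [mem_ball, dist_eq_norm] at hzball
    exact hzball
  have htabs : |t| < ε/4 := by
    have h1 : ‖z - x'‖ = |t| := by
      rw [hzt, add_sub_cancel_left, norm_smul, hv1, mul_one, Real.norm_eq_abs]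
    have h2 : ‖z - x'‖ ≤ ‖z - y‖ + ‖y - x'‖ := norm_sub_le_norm_sub_add_norm_sub _ _ _
    have h3 : ‖y - x'‖ = s * d := by rw [norm_sub_rev, hx'y]
    have h4 : s * d < ε/8 := lt_of_lt_of_le hsd (min_le_right _ _)
    rw [h1, h3] at h2
    linarith
  -- the boundary point on the face
  set w := (t / (1 - s)) • v with hw
  have hs1 : (1:ℝ) - s ≥ 1/2 := by linarith
  have hwdir : w ∈ (affineSpan ℝ F).direction := by
    rw [direction_affineSpan]
    exact Submodule.smul_mem _ _ (hSle hvS)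
  have hwnorm : ‖w‖ < ε := by
    rw [hw, norm_smul, hv1, mul_one, Real.norm_eq_abs, abs_div]
    have h1 : |1 - s| = 1 - s := abs_of_pos (by linarith)
    rw [h1]
    rw [div_lt_iff₀ (by linarith)]
    calc |t| < ε/4 := htabs
      _ ≤ ε * (1 - s) := by nlinarith
  have hy'F : y + w ∈ F := hballF w hwdir hwnorm
  -- z is a combination of z₀ and y + w, hence interior
  have hzcombo : z = s • z₀ + (1 - s) • (y + w) := by
    rw [hzt, hx', hw, smul_add, smul_smul]
    rw [mul_div_cancel₀ _ (by linarith : (1:ℝ) - s ≠ 0)]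
    abel
  have hzΩ : z ∈ Ω := by
    have := hΩc.combo_interior_closure_mem_interior (a := s) (b := 1 - s)
      (by rw [hΩo.interior_eq]; exact hz₀) (hy'F.1)
      hspos (by linarith) (by ring)
    rw [hΩo.interior_eq] at this
    rw [hzcombo]
    exact this
  exact (hΩo.frontier_eq ▸ hzfr).2 hzΩ

end BRAux
namespace BRAux

set_option maxHeartbeats 1000000 in
lemma exists_O_L {N j' jm : ℕ} (hj'pos : 0 < j') (hjle : j' ≤ N) (hsum : j' + jm = N)
    (W : Submodule ℝ (Euc N)) (hWrank : finrank ℝ W = jm) :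
    ∃ (O : Euc N ≃ₗᵢ[ℝ] Euc N) (L : Euc N →ₗ[ℝ] Euc j'),
      (∀ z, truncF hjle (O.symm z) = L z) ∧
      (∀ u n : Euc N, n ∈ Wᗮ → ⟪L u, L n⟫ = ⟪u, n⟫) ∧
      (∀ w ∈ W, L w = 0) := by
  have hWperp : finrank ℝ (Wᗮ : Submodule ℝ (Euc N)) = j' := by
    have h1 := W.finrank_add_finrank_orthogonal
    rw [hWrank, finrank_euclideanSpace_fin] at h1
    omega
  set bV : OrthonormalBasis (Fin j') ℝ (Wᗮ : Submodule ℝ (Euc N)) :=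
    (stdOrthonormalBasis ℝ (Wᗮ : Submodule ℝ (Euc N))).reindex (finCongr hWperp) with hbV
  set bW : OrthonormalBasis (Fin jm) ℝ W :=
    (stdOrthonormalBasis ℝ W).reindex (finCongr hWrank) with hbW
  set famF : (Fin j' ⊕ Fin jm) → Euc N :=
    Sum.elim (fun i => ((bV i : (Wᗮ : Submodule ℝ (Euc N))) : Euc N))
      (fun i => ((bW i : W) : Euc N)) with hfamF
  have hVW : ∀ (i : Fin j') (k : Fin jm),
      ⟪((bV i : (Wᗮ : Submodule ℝ (Euc N))) : Euc N), ((bW k : W) : Euc N)⟫ = (0:ℝ) := by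
    intro i k
    have h1 : ((bV i : (Wᗮ : Submodule ℝ (Euc N))) : Euc N) ∈ Wᗮ := (bV i).2
    have h2 := (Submodule.mem_orthogonal W _).mp h1 ((bW k : W) : Euc N) (bW k).2
    rw [real_inner_comm] at h2
    exact h2
  have horth : Orthonormal ℝ famF := by
    rw [orthonormal_iff_ite]
    rintro (i | i) (k | k) <;>
      simp only [hfamF, Sum.elim_inl, Sum.elim_inr]
    · have h1 := orthonormal_iff_ite.mp bV.orthonormal i k
      rw [Submodule.coe_inner] at h1
      rw [h1]
      by_cases h : i = k <;> simp [h]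
    · rw [hVW i k]
      simp
    · rw [real_inner_comm, hVW k i]
      simp
    · have h1 := orthonormal_iff_ite.mp bW.orthonormal i k
      rw [Submodule.coe_inner] at h1
      rw [h1]
      by_cases h : i = k <;> simp [h]
  haveI : Nonempty (Fin j' ⊕ Fin jm) := ⟨Sum.inl ⟨0, hj'pos⟩⟩
  have hcard : Fintype.card (Fin j' ⊕ Fin jm) = finrank ℝ (Euc N) := by
    simp [finrank_euclideanSpace_fin, hsum]
  set basis := basisOfLinearIndependentOfCardEqFinrank horth.linearIndependent hcard with hbasis
  have hbc : ⇑basis = famF := coe_basisOfLinearIndependentOfCardEqFinrank _ _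
  set bb := basis.toOrthonormalBasis (by rwa [hbc]) with hbbdef
  have hbb : ⇑bb = famF := by rw [hbbdef, Basis.coe_toOrthonormalBasis, hbc]
  set e : (Fin j' ⊕ Fin jm) ≃ Fin N := finSumFinEquiv.trans (finCongr hsum) with he
  set b' := bb.reindex e with hb'
  set O := b'.repr.symm with hO
  have hesymm : ∀ i : Fin j', e.symm (Fin.castLE hjle i) = Sum.inl i := by
    intro i
    rw [Equiv.symm_apply_eq]
    apply Fin.ext
    simp [he]
  have hb'cast : ∀ i : Fin j', b' (Fin.castLE hjle i)
      = ((bV i : (Wᗮ : Submodule ℝ (Euc N))) : Euc N) := by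
    intro i
    rw [hb', bb.reindex_apply, hesymm i]
    exact congrFun hbb (Sum.inl i)
  set L : Euc N →ₗ[ℝ] Euc j' :=
    { toFun := fun z => (WithLp.toLp 2 (fun i => ⟪((bV i : (Wᗮ : Submodule ℝ (Euc N))) : Euc N), z⟫) : Euc j')
      map_add' := by
        intro u v
        ext i
        show ⟪_, u + v⟫ = ⟪_, u⟫ + ⟪_, v⟫
        exact inner_add_right _ _ _
      map_smul' := by
        intro c u
        ext i
        show ⟪_, c • u⟫ = c * ⟪_, u⟫
        exact real_inner_smul_right _ _ _ } with hL
  have hLapp : ∀ (z : Euc N) (i : Fin j'),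
      L z i = ⟪((bV i : (Wᗮ : Submodule ℝ (Euc N))) : Euc N), z⟫ := fun z i => rfl
  refine ⟨O, L, ?_, ?_, ?_⟩
  · intro z
    ext i
    show (O.symm z) (Fin.castLE hjle i) = L z i
    rw [hO, LinearIsometryEquiv.symm_symm, b'.repr_apply_apply, hb'cast i, hLapp]
  · intro u n hn
    set nsub : (Wᗮ : Submodule ℝ (Euc N)) := ⟨n, hn⟩ with hnsub
    have hexp : ∑ i, ⟪((bV i : (Wᗮ : Submodule ℝ (Euc N))) : Euc N), n⟫
        • ((bV i : (Wᗮ : Submodule ℝ (Euc N))) : Euc N) = n := by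
      have h1 := bV.sum_repr nsub
      have h2 := congrArg (Subtype.val : (Wᗮ : Submodule ℝ (Euc N)) → Euc N) h1
      rw [Submodule.coe_sum] at h2
      have h3 : ∀ i, (Subtype.val (bV.repr nsub i • bV i))
          = ⟪((bV i : (Wᗮ : Submodule ℝ (Euc N))) : Euc N), n⟫
            • ((bV i : (Wᗮ : Submodule ℝ (Euc N))) : Euc N) := by
        intro i
        rw [SetLike.val_smul, bV.repr_apply_apply, Submodule.coe_inner]
      rw [Finset.sum_congr rfl (fun i _ => h3 i)] at h2
      exact h2
  -- ⟪u, n⟫ expansion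
    have hun : ⟪u, n⟫ = ∑ i, ⟪((bV i : (Wᗮ : Submodule ℝ (Euc N))) : Euc N), n⟫
        * ⟪u, ((bV i : (Wᗮ : Submodule ℝ (Euc N))) : Euc N)⟫ := by
      conv_lhs => rw [← hexp]
      rw [inner_sum]
      exact Finset.sum_congr rfl (fun i _ => real_inner_smul_right _ _ _)
    have hLL : ⟪L u, L n⟫ = ∑ i, (L u i) * (L n i) := by
      rw [PiLp.inner_apply]
      exact Finset.sum_congr rfl (fun i _ => by
        simp [RCLike.inner_apply, starRingEnd_apply, star_trivial]; ring)
    rw [hLL, hun]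
    apply Finset.sum_congr rfl
    intro i _
    rw [hLapp, hLapp, real_inner_comm u]
    ring
  · intro w hw
    ext i
    show ⟪((bV i : (Wᗮ : Submodule ℝ (Euc N))) : Euc N), w⟫ = (0 : Euc j') i
    have h1 := (Submodule.mem_orthogonal W _).mp (bV i).2 w hw
    rw [real_inner_comm] at h1
    rw [h1]
    rfl

end BRAux
namespace BRAux

set_option maxHeartbeats 1000000 in
lemma sublevel_strictconvex {m : ℕ} (a s : ℕ → ℝ) (hap : ∀ k, 0 < a k)
    (hsum : Summable a) (hs : ∀ k, 0 < s k) (hks : ∀ B : ℝ, 0 < B → ∃ k, s k < B)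
    (p' n' : Euc m) :
    StrictlyConvexSet {q : Euc m | ⟪q - p', n'⟫ + phi a s ‖q - p'‖ < 0} := by
  have ha : ∀ k, 0 ≤ a k := fun k => (hap k).le
  set g : Euc m → ℝ := fun q => ⟪q - p', n'⟫ + phi a s ‖q - p'‖ with hg
  have hφcont : Continuous (phi a s) := phi_continuous ha hsum hs
  have hgcont : Continuous g := by
    apply Continuous.add
    · exact Continuous.inner (continuous_id.sub continuous_const) continuous_const
    · exact hφcont.comp (continuous_id.sub continuous_const).norm
  have hclg : closure {q : Euc m | g q < 0} ⊆ {q | g q ≤ 0} :=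
    closure_minimal (fun q hq => (le_of_lt (hq : g q < 0) : g q ≤ 0)) (isClosed_le hgcont continuous_const)
  intro q1 hq1 q2 hq2 hne t ht0 ht1
  have hg1 : g q1 ≤ 0 := hclg hq1
  have hg2 : g q2 ≤ 0 := hclg hq2
  set u1 := q1 - p' with hu1
  set u2 := q2 - p' with hu2
  have hune : u1 ≠ u2 := by
    intro h
    apply hne
    rwa [hu1, hu2, sub_left_inj] at h
  set A := ‖u1‖ with hA
  set B := ‖u2‖ with hB
  have hA0 : 0 ≤ A := norm_nonneg _
  have hB0 : 0 ≤ B := norm_nonneg _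
  have hcd : (1-t) • q1 + t • q2 - p' = (1-t) • u1 + t • u2 := by
    rw [hu1, hu2]; module
  set rc := ‖(1-t) • u1 + t • u2‖ with hrc
  have hrcle : rc ≤ (1-t) * A + t * B := by
    calc rc ≤ ‖(1-t) • u1‖ + ‖t • u2‖ := norm_add_le _ _
      _ = (1-t) * A + t * B := by
          rw [norm_smul, norm_smul, Real.norm_of_nonneg (by linarith),
            Real.norm_of_nonneg ht0.le]
  have hφpart : phi a s rc < (1-t) * phi a s A + t * phi a s B := by
    rcases eq_or_ne A B with hAB | hAB
    · -- equal radii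
      have hApos : 0 < A := by
        rcases (lt_or_eq_of_le hA0) with h | h
        · exact h
        · exfalso
          apply hune
          have h1 : u1 = 0 := norm_eq_zero.mp (by rw [← hA, ← h])
          have h2 : u2 = 0 := norm_eq_zero.mp (by rw [← hB, ← hAB, ← h])
          rw [h1, h2]
      have hstrict : rc < A := by
        rw [hrc]
        exact norm_combo_lt_of_ne le_rfl (by rw [← hB, hAB]) hune
          (by linarith) ht0 (by ring)
      obtain ⟨k0, hk0⟩ := hks A hApos
      have h3 := phi_strictmono ha hsum hs hstrict (k0 := k0) hk0 (hap k0)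
      have h4 : (1-t) * phi a s A + t * phi a s B = phi a s A := by
        rw [← hAB]; ring
      rw [h4]
      exact h3
    · -- distinct radii
      have hmaxpos : 0 < max A B := by
        rcases lt_or_eq_of_le (le_max_left A B) with h | h
        · exact lt_of_le_of_lt hA0 h
        · have h1 : A ≤ max A B := le_max_left _ _
          rcases lt_or_eq_of_le hA0 with h2 | h2
          · linarith
          · have h3 : B ≤ max A B := le_max_right _ _
            rw [← h] at h3
            have h4 : B = A := le_antisymm h3 (by rw [← h2] at *; exact hB0)
            exact absurd h4.symm hAB
      obtain ⟨k0, hk0⟩ := hks (max A B) hmaxpos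
      have h5 := phi_strictconvex ha hsum hs hA0 hB0 hAB ht0 ht1 (k0 := k0) hk0 (hap k0)
      have h6 : phi a s rc ≤ phi a s ((1-t) * A + t * B) :=
        phi_mono ha hsum hs hrcle
      linarith
  show g ((1-t) • q1 + t • q2) < 0
  have hgc : g ((1-t) • q1 + t • q2)
      = (1-t) * ⟪u1, n'⟫ + t * ⟪u2, n'⟫ + phi a s rc := by
    rw [hg]
    simp only
    rw [hcd, inner_add_left, real_inner_smul_left, real_inner_smul_left, hrc]
  rw [hgc]
  have hgq1 : g q1 = ⟪u1, n'⟫ + phi a s A := by rw [hg]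
  have hgq2 : g q2 = ⟪u2, n'⟫ + phi a s B := by rw [hg]
  rw [hgq1] at hg1
  rw [hgq2] at hg2
  nlinarith [mul_nonneg (sub_nonneg.mpr ht1.le) (neg_nonneg.mpr hg1),
    mul_nonneg ht0.le (neg_nonneg.mpr hg2)]

end BRAux
namespace BRAux

set_option maxHeartbeats 2000000 in
lemma build_cylinder {N j : ℕ} (hj1 : 1 ≤ j) (hjN : j ≤ N) {Ω : Set (Euc N)}
    (hΩo : IsOpen Ω) (hΩb : IsBounded Ω) (hΩne : Ω.Nonempty) (hΩc : Convex ℝ Ω)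
    {x : Euc N} (hx : x ∈ frontier Ω) {n : Euc N} (hn1 : ‖n‖ = 1)
    (hsupp : ∀ z ∈ Ω, ⟪z - x, n⟫ < 0)
    {W : Submodule ℝ (Euc N)} (hWrank : finrank ℝ W = j - 1) (hnW : n ∈ Wᗮ)
    (hface : ∀ z ∈ closure Ω, ⟪z - x, n⟫ = 0 → z - x ∈ W) :
    ∃ (O : Euc N ≃ₗᵢ[ℝ] Euc N) (C : Set (Euc N)),
      IsCylinder N (N - j + 1) C ∧ Ω ⊆ (⇑O) '' C ∧ x ∈ frontier ((⇑O) '' C) := by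
  have hjle : N - j + 1 ≤ N := by omega
  have hsum : (N - j + 1) + (j - 1) = N := by omega
  obtain ⟨O, L, hOL, hinner, hLW⟩ := exists_O_L (by omega) hjle hsum W hWrank
  have hLcont : Continuous L := L.continuous_of_finiteDimensional
  have hsuppcl : ∀ z ∈ closure Ω, ⟪z - x, n⟫ ≤ 0 := by
    intro z hz
    have h1 : closure Ω ⊆ {z : Euc N | ⟪z - x, n⟫ ≤ 0} := by
      apply closure_minimal (fun w hw => (hsupp w hw).le)
      exact isClosed_le
        (Continuous.inner (𝕜 := ℝ) (continuous_id.sub continuous_const) continuous_const)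
        continuous_const
    exact h1 hz
  have hLn1 : ‖L n‖ = 1 := by
    have hLn : ⟪L n, L n⟫ = (1:ℝ) := by
      rw [hinner n n hnW, real_inner_self_eq_norm_mul_norm, hn1]; norm_num
    have h1 : ⟪L n, L n⟫ = ‖L n‖ * ‖L n‖ := real_inner_self_eq_norm_mul_norm _
    rw [hLn] at h1
    have h2 : (‖L n‖ - 1) * (‖L n‖ + 1) = 0 := by nlinarith
    rcases mul_eq_zero.mp h2 with h | h
    · linarith
    · linarith [norm_nonneg (L n)]
  -- compactness, the maximum T2
  have hK : IsCompact (closure Ω) := hΩb.isCompact_closure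
  have hKne : (closure Ω).Nonempty := hΩne.closure
  have hfc : Continuous (fun z : Euc N => ‖L z - L x‖) := (hLcont.sub continuous_const).norm
  obtain ⟨zmax, hzmaxK, hzmax⟩ := hK.exists_isMaxOn hKne hfc.continuousOn
  set T2 := ‖L zmax - L x‖ with hT2
  have hT2max : ∀ z ∈ closure Ω, ‖L z - L x‖ ≤ T2 := fun z hz => isMaxOn_iff.mp hzmax z hz
  have hT2pos : 0 < T2 := by
    obtain ⟨z₀, hz₀⟩ := hΩne
    obtain ⟨ε, hε, hball⟩ := Metric.isOpen_iff.mp hΩo z₀ hz₀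
    have hz₁ : z₀ + (ε/2) • n ∈ Ω := by
      apply hball
      rw [mem_ball, dist_eq_norm, add_sub_cancel_left, norm_smul, hn1, mul_one,
        Real.norm_of_nonneg (by linarith)]
      linarith
    have h1 : ‖L (z₀ + (ε/2) • n) - L z₀‖ = ε/2 := by
      rw [show L (z₀ + (ε/2) • n) - L z₀ = (ε/2) • L n by rw [map_add, map_smul]; abel,
        norm_smul, hLn1, mul_one, Real.norm_of_nonneg (by linarith)]
    have h2 := hT2max _ (subset_closure hz₁)
    have h3 := hT2max _ (subset_closure hz₀)
    have h4 : ‖L (z₀ + (ε/2) • n) - L z₀‖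
        ≤ ‖L (z₀ + (ε/2) • n) - L x‖ + ‖L x - L z₀‖ :=
      norm_sub_le_norm_sub_add_norm_sub _ _ _
    rw [h1, norm_sub_rev (L x) (L z₀)] at h4
    linarith
  -- the modulus function
  set hfun : ℝ → ℝ := fun t => sInf ((fun z => -⟪z - x, n⟫) ''
    {z : Euc N | z ∈ closure Ω ∧ t ≤ ‖L z - L x‖}) with hhfun
  have hbddB : ∀ t : ℝ, BddBelow ((fun z => -⟪z - x, n⟫) ''
      {z : Euc N | z ∈ closure Ω ∧ t ≤ ‖L z - L x‖}) := by
    intro t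
    refine ⟨0, ?_⟩
    rintro r ⟨z, hz, rfl⟩
    simp only [neg_nonneg] at *
    linarith [hsuppcl z hz.1]
  have hne' : ∀ t : ℝ, t ≤ T2 → ((fun z => -⟪z - x, n⟫) ''
      {z : Euc N | z ∈ closure Ω ∧ t ≤ ‖L z - L x‖}).Nonempty :=
    fun t ht => ⟨_, ⟨zmax, ⟨hzmaxK, ht⟩, rfl⟩⟩
  have hmono : ∀ t t' : ℝ, t ≤ t' → t' ≤ T2 → hfun t ≤ hfun t' := by
    intro t t' h ht'
    apply csInf_le_csInf (hbddB t) (hne' t' ht')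
    apply Set.image_mono
    intro z hz
    exact ⟨hz.1, le_trans h hz.2⟩
  have hle : ∀ t : ℝ, ∀ z, z ∈ closure Ω → t ≤ ‖L z - L x‖ → hfun t ≤ -⟪z - x, n⟫ :=
    fun t z h1 h2 => csInf_le (hbddB t) ⟨z, ⟨h1, h2⟩, rfl⟩
  have hpos : ∀ t : ℝ, 0 < t → t ≤ T2 → 0 < hfun t := by
    intro t ht htT
    have hStc : IsCompact {z : Euc N | z ∈ closure Ω ∧ t ≤ ‖L z - L x‖} := by
      have h1 : {z : Euc N | z ∈ closure Ω ∧ t ≤ ‖L z - L x‖}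
          = closure Ω ∩ {z | t ≤ ‖L z - L x‖} := rfl
      rw [h1]
      exact hK.inter_right (isClosed_le continuous_const hfc)
    have hStne : {z : Euc N | z ∈ closure Ω ∧ t ≤ ‖L z - L x‖}.Nonempty :=
      ⟨zmax, hzmaxK, htT⟩
    have hcont2 : ContinuousOn (fun z : Euc N => -⟪z - x, n⟫)
        {z : Euc N | z ∈ closure Ω ∧ t ≤ ‖L z - L x‖} :=
      ((Continuous.inner (continuous_id.sub continuous_const) continuous_const).neg).continuousOn
    obtain ⟨zmin, hzminSt, hzmin⟩ := hStc.exists_isMinOn hStne hcont2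
    have hv0 : 0 < -⟪zmin - x, n⟫ := by
      rcases lt_or_eq_of_le (hsuppcl zmin hzminSt.1) with h | h
      · linarith
      · exfalso
        have h2 : zmin - x ∈ W := hface zmin hzminSt.1 h
        have h3 : L zmin - L x = 0 := by rw [← map_sub]; exact hLW _ h2
        have h4 := hzminSt.2
        rw [h3, norm_zero] at h4
        linarith
    have h6 : ∀ r ∈ ((fun z => -⟪z - x, n⟫) ''
        {z : Euc N | z ∈ closure Ω ∧ t ≤ ‖L z - L x‖}), -⟪zmin - x, n⟫ ≤ r := by
      rintro r ⟨z, hzSt, rfl⟩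
      exact isMinOn_iff.mp hzmin z hzSt
    have h7 := le_csInf (hne' t htT) h6
    rw [hhfun]
    linarith
  -- the sequences
  set sfun : ℕ → ℝ := fun k => T2 / 2 ^ (k + 1) with hsfun
  have hspos : ∀ k, 0 < sfun k := fun k => by rw [hsfun]; positivity
  have h2pow : ∀ k : ℕ, (1:ℝ) ≤ 2 ^ (k+1) := fun k => one_le_pow₀ (by norm_num)
  have hsle : ∀ k, sfun k ≤ T2 := by
    intro k
    rw [hsfun]
    simp only
    rw [div_le_iff₀ (by positivity)]
    nlinarith [h2pow k]
  have hsmono : ∀ k m : ℕ, k ≤ m → sfun m ≤ sfun k := by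
    intro k m hkm
    rw [hsfun]
    simp only
    have h1 : (2:ℝ)^(k+1) ≤ 2^(m+1) := pow_le_pow_right₀ (by norm_num) (by omega)
    have h2 : (0:ℝ) < 2^(k+1) := by positivity
    have h3 : (0:ℝ) < 2^(m+1) := by positivity
    rw [div_le_div_iff₀ h3 h2]
    nlinarith
  set Hf : ℕ → ℝ := fun k => hfun (sfun k) with hHf
  have hHpos : ∀ k, 0 < Hf k := fun k => hpos _ (hspos k) (hsle k)
  have hHmono : ∀ k m : ℕ, k ≤ m → Hf m ≤ Hf k :=
    fun k m hkm => hmono _ _ (hsmono k m hkm) (hsle k)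
  set af : ℕ → ℝ := fun k => Hf k / (2 * T2^2) * (1/4) ^ (k+1) with haf
  have hapos : ∀ k, 0 < af k := fun k => by
    rw [haf]
    have := hHpos k
    positivity
  have haf0 : ∀ k, 0 ≤ af k := fun k => (hapos k).le
  have hsummable : Summable af := by
    have hgeo := (summable_geometric_of_lt_one (r := (1/4:ℝ)) (by norm_num)
      (by norm_num)).mul_left (Hf 0 / (2*T2^2) * (1/4))
    apply Summable.of_nonneg_of_le haf0 ?_ hgeo
    intro k
    have h1 : Hf k ≤ Hf 0 := hHmono 0 k (Nat.zero_le k)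
    have h2 : (0:ℝ) ≤ (1/4:ℝ)^k := by positivity
    have h3 : (0:ℝ) < 2 * T2^2 := by positivity
    calc af k = Hf k / (2*T2^2) * (1/4) * (1/4)^k := by rw [haf]; ring
      _ ≤ Hf 0 / (2*T2^2) * (1/4) * (1/4)^k := by
          apply mul_le_mul_of_nonneg_right ?_ h2
          apply mul_le_mul_of_nonneg_right ?_ (by norm_num)
          rw [div_eq_mul_inv, div_eq_mul_inv]
          exact mul_le_mul_of_nonneg_right h1 (by positivity)
      _ = Hf 0 / (2*T2^2) * (1/4) * (1/4)^k := rfl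
  have hks : ∀ B : ℝ, 0 < B → ∃ k, sfun k < B := by
    intro B hB
    obtain ⟨k, hk⟩ := pow_unbounded_of_one_lt (T2 / B) (by norm_num : (1:ℝ) < 2)
    refine ⟨k, ?_⟩
    rw [hsfun]
    simp only
    rw [div_lt_iff₀ (by positivity)]
    have h2 : (2:ℝ)^k ≤ 2^(k+1) := by
      apply pow_le_pow_right₀ (by norm_num)
      omega
    have h3 : T2 / B < 2^(k+1) := lt_of_lt_of_le hk h2
    calc T2 = (T2 / B) * B := by field_simp
      _ < 2^(k+1) * B := by exact mul_lt_mul_of_pos_right h3 hB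
      _ = B * 2^(k+1) := by ring
  -- the function g and the set ω
  set p' := L x with hp'
  set n' := L n with hn'
  set g : Euc (N - j + 1) → ℝ := fun q => ⟪q - p', n'⟫ + phi af sfun ‖q - p'‖ with hg
  have hφcont : Continuous (phi af sfun) := phi_continuous haf0 hsummable hspos
  have hgcont : Continuous g := by
    apply Continuous.add
    · exact Continuous.inner (continuous_id.sub continuous_const) continuous_const
    · exact hφcont.comp (continuous_id.sub continuous_const).norm
  set ω : Set (Euc (N - j + 1)) := {q | g q < 0} with hω
  have hωopen : IsOpen ω := isOpen_lt hgcont continuous_const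
  -- C₀
  set C₀ := ∑' k, af k with hC₀
  have hC₀0 : 0 ≤ C₀ := tsum_nonneg haf0
  have hφsq : ∀ t : ℝ, 0 ≤ t → phi af sfun t ≤ C₀ * t^2 := by
    intro t ht
    have := phi_le_sq haf0 hsummable hspos ht
    rwa [hC₀]
  have hsmall : ∀ c : ℝ, 0 < c → c ≤ 1/(C₀+1) → g (p' - c • n') < 0 := by
    intro c hc hcle
    have h1 : p' - c • n' - p' = -(c • n') := by abel
    have h2 : ‖p' - c • n' - p'‖ = c := by
      rw [h1, norm_neg, norm_smul, hn', hLn1, mul_one, Real.norm_of_nonneg hc.le]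
    have h3 : ⟪p' - c • n' - p', n'⟫ = -c := by
      rw [h1, inner_neg_left, real_inner_smul_left, hn']
      rw [real_inner_self_eq_norm_mul_norm, hLn1]
      ring
    rw [hg]
    simp only
    rw [h2, h3]
    have h4 : phi af sfun c ≤ C₀ * c^2 := hφsq c hc.le
    have h5 : C₀ * c < 1 := by
      have h6 : C₀ * c ≤ C₀ * (1/(C₀+1)) := by
        apply mul_le_mul_of_nonneg_left hcle hC₀0
      have h7 : C₀ * (1/(C₀+1)) < 1 := by
        rw [mul_one_div, div_lt_one (by linarith)]
        linarith
      linarith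
    nlinarith
  have hωne : ω.Nonempty := by
    refine ⟨p' - (1/(C₀+1)) • n', ?_⟩
    rw [hω]
    exact hsmall _ (by positivity) le_rfl
  have hωb : IsBounded ω := by
    apply (Metric.isBounded_closedBall (x := p')
      (r := max (2 * sfun 0) (4 / af 0))).subset
    intro q hq
    rw [hω] at hq
    have hq' : g q < 0 := hq
    rw [mem_closedBall, dist_eq_norm]
    set tq := ‖q - p'‖ with htq
    have htq0 : 0 ≤ tq := norm_nonneg _
    have hlow : -tq ≤ ⟪q - p', n'⟫ := by
      have h1 := real_inner_le_norm (-(q - p')) n'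
      rw [inner_neg_left, norm_neg, hn', hLn1, mul_one] at h1
      linarith
    have h2 : phi af sfun tq < tq := by
      rw [hg] at hq'
      simp only at hq'
      rw [← htq] at hq'
      linarith
    have h3 := phi_lower haf0 hsummable hspos tq
    by_contra hcon
    push_neg at hcon
    rw [max_lt_iff] at hcon
    have h4 : sfun 0 < tq/2 := by linarith [hcon.1]
    have h5 : fb (sfun 0) tq = (tq - sfun 0)^2 := by
      rw [fb]
      congr 1
      rw [max_eq_left]
      linarith [hspos 0]
    have h6 : (tq/2)^2 ≤ (tq - sfun 0)^2 := by
      apply pow_le_pow_left₀ (by linarith) (by linarith)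
    have h7 : af 0 * (tq/2)^2 ≤ phi af sfun tq := by
      calc af 0 * (tq/2)^2 ≤ af 0 * (tq - sfun 0)^2 := by
            apply mul_le_mul_of_nonneg_left h6 (haf0 0)
        _ = af 0 * fb (sfun 0) tq := by rw [h5]
        _ ≤ phi af sfun tq := h3
    have h8 : 4 / af 0 < tq := hcon.2
    have h9 : 0 < af 0 := hapos 0
    have h10 : 4 < af 0 * tq := by
      rw [div_lt_iff₀ h9] at h8
      linarith [h8]
    nlinarith
  have hωsc : StrictlyConvexSet ω := by
    rw [hω]
    exact sublevel_strictconvex af sfun hapos hsummable hspos hks p' n'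
  -- the cylinder
  refine ⟨O, {z : Euc N | truncF hjle z ∈ ω}, ⟨hjle, ω, hωopen, hωb, hωne, hωsc, rfl⟩, ?_, ?_⟩
  · -- Ω ⊆ O '' C
    intro z hz
    refine ⟨O.symm z, ?_, O.apply_symm_apply z⟩
    show truncF hjle (O.symm z) ∈ ω
    rw [hOL z, hω]
    show g (L z) < 0
    have hzc : z ∈ closure Ω := subset_closure hz
    have hlin : ⟪L z - p', n'⟫ = ⟪z - x, n⟫ := by
      rw [hp', hn', ← map_sub]
      exact hinner (z - x) n hnW
    have hgz : g (L z) = ⟪z - x, n⟫ + phi af sfun ‖L z - p'‖ := by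
      rw [hg]
      simp only
      rw [hlin]
    rcases eq_or_lt_of_le (norm_nonneg (L z - p')) with h0 | h0
    · rw [hgz, ← h0, phi_zero haf0 hsummable hspos, add_zero]
      exact hsupp z hz
    · set tz := ‖L z - p'‖ with htz
      have htzT2 : tz ≤ T2 := by
        rw [htz]
        exact hT2max z hzc
      have hex : ∃ k, sfun k < tz := hks tz h0
      have hk : sfun (Nat.find hex) < tz := Nat.find_spec hex
      set k := Nat.find hex with hkdef
      have hkmin : ∀ m, m < k → ¬ (sfun m < tz) := fun m hm => Nat.find_min hex hm
      have hterm : ∀ m, af m * fb (sfun m) tz ≤ (Hf k / 2) * (1/4)^(m+1) := by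
        intro m
        rcases lt_or_ge m k with hmk | hmk
        · have h1 : tz ≤ sfun m := le_of_not_gt (hkmin m hmk)
          rw [fb_zero h1, mul_zero]
          have := hHpos k
          positivity
        · have h1 : fb (sfun m) tz ≤ T2^2 := by
            have h2 := fb_le_sq (hspos m).le h0.le
            nlinarith
          have h2 : Hf m ≤ Hf k := hHmono k m hmk
          calc af m * fb (sfun m) tz ≤ af m * T2^2 := by
                apply mul_le_mul_of_nonneg_left h1 (haf0 m)
            _ = Hf m / 2 * (1/4)^(m+1) := by
                rw [haf]
                simp only
                field_simp
            _ ≤ Hf k / 2 * (1/4)^(m+1) := by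
                apply mul_le_mul_of_nonneg_right (by linarith) (by positivity)
      have hφtz : phi af sfun tz ≤ (Hf k / 2) / 3 :=
        phi_bound haf0 hsummable hspos hterm
      have hHk_le : Hf k ≤ hfun tz := hmono (sfun k) tz hk.le htzT2
      have hhle : hfun tz ≤ -⟪z - x, n⟫ := by
        apply hle tz z hzc
        rw [htz]
      have hHkpos : 0 < Hf k := hHpos k
      rw [hgz]
      linarith
  · -- x ∈ frontier (O '' C)
    have himg : (⇑O) '' {z : Euc N | truncF hjle z ∈ ω} = {z : Euc N | g (L z) < 0} := by
      ext z
      constructor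
      · rintro ⟨c, hc, rfl⟩
        have h1 : truncF hjle c ∈ ω := hc
        have h2 : O.symm (O c) = c := O.symm_apply_apply c
        show g (L (O c)) < 0
        have h3 := hOL (O c)
        rw [h2] at h3
        rw [← h3]
        exact h1
      · intro hz
        refine ⟨O.symm z, ?_, O.apply_symm_apply z⟩
        show truncF hjle (O.symm z) ∈ ω
        rw [hOL z]
        exact hz
    rw [himg]
    have hUopen : IsOpen {z : Euc N | g (L z) < 0} :=
      isOpen_lt (hgcont.comp hLcont) continuous_const
    rw [hUopen.frontier_eq]
    constructor
    · -- x ∈ closure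
      rw [Metric.mem_closure_iff]
      intro ρ hρ
      set c := min (1/(C₀+1)) (ρ/2) with hc
      have hcpos : 0 < c := lt_min (by positivity) (by linarith)
      refine ⟨x - c • n, ?_, ?_⟩
      · show g (L (x - c • n)) < 0
        have h1 : L (x - c • n) = p' - c • n' := by
          rw [map_sub, map_smul, hp', hn']
        rw [h1]
        exact hsmall c hcpos (min_le_left _ _)
      · rw [dist_eq_norm]
        have h2 : x - (x - c • n) = c • n := by abel
        rw [h2, norm_smul, hn1, mul_one, Real.norm_of_nonneg hcpos.le]
        calc c ≤ ρ/2 := min_le_right _ _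
          _ < ρ := by linarith
    · -- x ∉ U
      intro hmem
      have h1 : g (L x) < 0 := hmem
      have h2 : g (L x) = 0 := by
        rw [hg]
        simp only
        rw [hp', sub_self, norm_zero, phi_zero haf0 hsummable hspos,
          inner_zero_left, add_zero]
      rw [h2] at h1
      exact lt_irrefl _ h1

end BRAux
namespace BRAux

lemma dirB {N j : ℕ} (hj1 : 1 ≤ j) (hjN : j ≤ N) {Ω : Set (Euc N)}
    (hΩo : IsOpen Ω) (hΩb : IsBounded Ω) (hΩne : Ω.Nonempty) (hΩc : Convex ℝ Ω) :
    MemGclass N j Ω → MemCclass N (N - j + 1) Ω := by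
  intro hG x hx
  obtain ⟨n, hn1, hsupp⟩ := exists_normal hΩo hΩc hΩne hx
  set F := {z : Euc N | z ∈ closure Ω ∧ ⟪z - x, n⟫ = 0} with hF
  have hW0 : finrank ℝ (vectorSpan ℝ F) ≤ j - 1 :=
    face_small hj1 hjN hΩo hΩb hΩne hΩc hG hx hsupp
  have hn0 : n ≠ 0 := by
    intro h
    rw [h, norm_zero] at hn1
    norm_num at hn1
  have hWle : vectorSpan ℝ F ≤ (ℝ ∙ n)ᗮ := by
    rw [vectorSpan_def, Submodule.span_le]
    intro w hw
    rw [Set.mem_vsub] at hw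
    obtain ⟨z1, hz1, z2, hz2, rfl⟩ := hw
    rw [SetLike.mem_coe, Submodule.mem_orthogonal_singleton_iff_inner_right]
    have h2 : ⟪n, z1 -ᵥ z2⟫ = ⟪z1 - x, n⟫ - ⟪z2 - x, n⟫ := by
      rw [real_inner_comm, show z1 -ᵥ z2 = (z1 - x) - (z2 - x) by
        rw [vsub_eq_sub]; abel, inner_sub_left]
    rw [h2, hz1.2, hz2.2, sub_zero]
  have hperp : finrank ℝ ((ℝ ∙ n)ᗮ : Submodule ℝ (Euc N)) = N - 1 := by
    have h1 := (ℝ ∙ n).finrank_add_finrank_orthogonal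
    rw [finrank_span_singleton hn0, finrank_euclideanSpace_fin] at h1
    omega
  obtain ⟨W, hW0le, hWle', hWrank⟩ := exists_finrank_between hWle hW0
    (by rw [hperp]; omega)
  have hnW : n ∈ Wᗮ := by
    rw [Submodule.mem_orthogonal]
    intro u hu
    have h1 := hWle' hu
    rwa [Submodule.mem_orthogonal_singleton_iff_inner_left] at h1
  have hface : ∀ z ∈ closure Ω, ⟪z - x, n⟫ = 0 → z - x ∈ W := by
    intro z hz hzn
    apply hW0le
    have hxF : x ∈ F := ⟨frontier_subset_closure hx, by simp⟩
    have hzF : z ∈ F := ⟨hz, hzn⟩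
    exact vsub_mem_vectorSpan ℝ hzF hxF
  exact build_cylinder hj1 hjN hΩo hΩb hΩne hΩc hx hn1 hsupp hWrank hnW hface

end BRAux

/-- **Proposition (final section).** For a bounded open convex `Ω ⊆ ℝ^N` and `1 ≤ j ≤ N`,
`Ω ∈ 𝒢_j` if and only if `Ω ∈ 𝒞_{N-j+1}`. -/
theorem memGclass_iff_memCclass {N j : ℕ} (hj1 : 1 ≤ j) (hjN : j ≤ N)
    (Ω : Set (Euc N)) (hΩo : IsOpen Ω) (hΩb : IsBounded Ω) (hΩne : Ω.Nonempty)
    (hΩc : Convex ℝ Ω) :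
    MemGclass N j Ω ↔ MemCclass N (N - j + 1) Ω := by
  constructor
  · exact fun h => BRAux.dirB hj1 hjN hΩo hΩb hΩne hΩc h
  · exact fun h => BRAux.dirA hj1 hjN hΩo hΩb h
end
end
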